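/- arXiv:0712.2863 — 8 statements merged into one kernel-verified Lean document; each statement's English description precedes it below -/
import Mathlib

section
/- Given càdlàg functions ℓ ≤ r (ℓ taking values in [−∞,∞), r in (−∞,∞]) and any càdlàg ψ, there exists at most one pair (φ, η) of càdlàg functions solving the extended Skorokhod problem on [ℓ(·), r(·)] for ψ; that is, if (φ, η) and (φ′, η′) both solve the ESP for ψ, then φ = φ′ and η = η′. -/
open Set Filter

/-- A càdlàg real-valued function on `[0, ∞)`. -/
def Cadlag (f : ℝ → ℝ) : Prop :=
  ∀ t : ℝ, 0 ≤ t → ContinuousWithinAt f (Set.Ici t) t ∧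
    (0 < t → ∃ l : ℝ, Filter.Tendsto f (nhdsWithin t (Set.Iio t)) (nhds l))

/-- A càdlàg extended-real-valued function on `[0, ∞)`. -/
def CadlagE (f : ℝ → EReal) : Prop :=
  ∀ t : ℝ, 0 ≤ t → ContinuousWithinAt f (Set.Ici t) t ∧
    (0 < t → ∃ l : EReal, Filter.Tendsto f (nhdsWithin t (Set.Iio t)) (nhds l))

/-- `(φ, η)` solves the extended Skorokhod problem on the time-dependent interval
`[ℓ(·), r(·)]` (with `ℓ` possibly `-∞`-valued and `r` possibly `+∞`-valued) for `ψ`. -/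
def ESPE (l r : ℝ → EReal) (ψ φ η : ℝ → ℝ) : Prop :=
  (∀ t : ℝ, 0 ≤ t → φ t = ψ t + η t ∧ l t ≤ (φ t : EReal) ∧ (φ t : EReal) ≤ r t) ∧
  (∀ s t : ℝ, 0 ≤ s → s ≤ t → (∀ u, s < u → u ≤ t → (φ u : EReal) < r u) → η s ≤ η t) ∧
  (∀ s t : ℝ, 0 ≤ s → s ≤ t → (∀ u, s < u → u ≤ t → l u < (φ u : EReal)) → η t ≤ η s) ∧
  (∀ t : ℝ, 0 < t →
    ((φ t : EReal) < r t → Function.leftLim η t ≤ η t) ∧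
    (l t < (φ t : EReal) → η t ≤ Function.leftLim η t)) ∧
  (((φ 0 : EReal) < r 0 → 0 ≤ η 0) ∧ (l 0 < (φ 0 : EReal) → η 0 ≤ 0))

open Topology in
lemma esp_le (l r : ℝ → EReal) (ψ φ φ' η η' : ℝ → ℝ)
    (hη : Cadlag η) (hη' : Cadlag η')
    (h : ESPE l r ψ φ η) (h' : ESPE l r ψ φ' η') :
    ∀ t : ℝ, 0 ≤ t → φ t ≤ φ' t := by
  intro t ht
  by_contra hgt
  push_neg at hgt
  -- θ u := φ u - φ' u = η u - η' u on [0,∞)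
  have hθ : ∀ u : ℝ, 0 ≤ u → φ u - φ' u = η u - η' u := by
    intro u hu
    have h1 := (h.1 u hu).1
    have h2 := (h'.1 u hu).1
    linarith
  -- at time 0, φ 0 ≤ φ' 0
  have h0 : φ 0 ≤ φ' 0 := by
    by_contra h0
    push_neg at h0
    have hcoe : (φ' 0 : EReal) < (φ 0 : EReal) := EReal.coe_lt_coe_iff.2 h0
    have hlφ : l 0 < (φ 0 : EReal) := lt_of_le_of_lt (h'.1 0 le_rfl).2.1 hcoe
    have hφr : (φ' 0 : EReal) < r 0 := lt_of_lt_of_le hcoe (h.1 0 le_rfl).2.2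
    have h1 : η 0 ≤ 0 := h.2.2.2.2.2 hlφ
    have h2 : 0 ≤ η' 0 := h'.2.2.2.2.1 hφr
    have := hθ 0 le_rfl
    linarith
  set A : Set ℝ := {u | 0 ≤ u ∧ u ≤ t ∧ φ u ≤ φ' u} with hA
  have h0A : (0 : ℝ) ∈ A := ⟨le_rfl, ht, h0⟩
  have hAne : A.Nonempty := ⟨0, h0A⟩
  have hAbdd : BddAbove A := ⟨t, fun u hu => hu.2.1⟩
  set s := sSup A with hs
  have hs0 : 0 ≤ s := le_csSup hAbdd h0A
  have hst : s ≤ t := csSup_le hAne fun u hu => hu.2.1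
  have key : ∀ u : ℝ, s < u → u ≤ t → φ' u < φ u := by
    intro u hsu hut
    by_contra hc
    push_neg at hc
    have : u ∈ A := ⟨le_trans hs0 hsu.le, hut, hc⟩
    exact absurd (le_csSup hAbdd this) (not_le.2 hsu)
  -- monotonicity on (s, t]
  have hηst : η t ≤ η s := by
    refine h.2.2.1 s t hs0 hst fun u hu1 hu2 => ?_
    exact lt_of_le_of_lt (h'.1 u (le_trans hs0 hu1.le)).2.1 (EReal.coe_lt_coe_iff.2 (key u hu1 hu2))
  have hη'st : η' s ≤ η' t := by
    refine h'.2.1 s t hs0 hst fun u hu1 hu2 => ?_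
    exact lt_of_lt_of_le (EReal.coe_lt_coe_iff.2 (key u hu1 hu2)) (h.1 u (le_trans hs0 hu1.le)).2.2
  have hθts : φ t - φ' t ≤ φ s - φ' s := by
    rw [hθ t ht, hθ s hs0]; linarith
  -- now case on sign at s
  by_cases hcase : φ s ≤ φ' s
  · linarith
  push_neg at hcase
  have hsne : s ∉ A := fun hmem => absurd hmem.2.2 (not_le.2 hcase)
  have hspos : 0 < s := lt_of_le_of_ne hs0 (fun e => hsne (e ▸ h0A))
  -- frequently θ ≤ 0 to the left of s
  have hfreq : ∃ᶠ u in 𝓝[<] s, η u - η' u ≤ 0 := by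
    rw [Filter.frequently_iff]
    intro U hU
    obtain ⟨a, ha, haU⟩ := mem_nhdsLT_iff_exists_Ioo_subset.1 hU
    obtain ⟨u, huA, hau⟩ := exists_lt_of_lt_csSup hAne ha
    have hus : u < s := lt_of_le_of_ne (le_csSup hAbdd huA) (fun e => hsne (e ▸ huA))
    refine ⟨u, haU ⟨hau, hus⟩, ?_⟩
    rw [← hθ u huA.1]; linarith [huA.2.2]
  -- left limits of η, η' at s
  obtain ⟨L1, hL1⟩ := (hη s hs0).2 hspos
  obtain ⟨L2, hL2⟩ := (hη' s hs0).2 hspos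
  have hne : 𝓝[<] s ≠ ⊥ := (nhdsLT_neBot s).ne'
  have hll1 : Function.leftLim η s = L1 := leftLim_eq_of_tendsto hL1
  have hll2 : Function.leftLim η' s = L2 := leftLim_eq_of_tendsto hL2
  have hLle : L1 - L2 ≤ 0 := by
    by_contra hL
    push_neg at hL
    have hev : ∀ᶠ u in 𝓝[<] s, (0:ℝ) < η u - η' u :=
      (hL1.sub hL2).eventually (eventually_gt_nhds hL)
    obtain ⟨u, hu1, hu2⟩ := (hfreq.and_eventually hev).exists
    linarith
  -- jump conditions at s
  have hcoe : (φ' s : EReal) < (φ s : EReal) := EReal.coe_lt_coe_iff.2 hcase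
  have hjump1 : η s ≤ Function.leftLim η s :=
    (h.2.2.2.1 s hspos).2 (lt_of_le_of_lt (h'.1 s hs0).2.1 hcoe)
  have hjump2 : Function.leftLim η' s ≤ η' s :=
    (h'.2.2.2.1 s hspos).1 (lt_of_lt_of_le hcoe (h.1 s hs0).2.2)
  have : φ s - φ' s ≤ 0 := by
    rw [hθ s hs0]
    rw [hll1] at hjump1; rw [hll2] at hjump2
    linarith
  linarith

/-- Uniqueness for the extended Skorokhod problem on a time-dependent interval:
given càdlàg `ℓ ≤ r` (with values in `[-∞,∞)` and `(-∞,∞]` respectively) and càdlàg `ψ`,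
any two càdlàg solutions of the ESP coincide on `[0, ∞)`. -/
theorem esp_unique (l r : ℝ → EReal) (hl : CadlagE l) (hr : CadlagE r)
    (hlr : ∀ t : ℝ, 0 ≤ t → l t ≤ r t)
    (hl' : ∀ t : ℝ, 0 ≤ t → l t < ⊤) (hr' : ∀ t : ℝ, 0 ≤ t → ⊥ < r t)
    (ψ φ φ' η η' : ℝ → ℝ) (hψ : Cadlag ψ)
    (hφ : Cadlag φ) (hη : Cadlag η) (hφ' : Cadlag φ') (hη' : Cadlag η')
    (h : ESPE l r ψ φ η) (h' : ESPE l r ψ φ' η') :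
    ∀ t : ℝ, 0 ≤ t → φ t = φ' t ∧ η t = η' t := by
  intro t ht
  have h1 := esp_le l r ψ φ φ' η η' hη hη' h h' t ht
  have h2 := esp_le l r ψ φ' φ η' η hη' hη h' h t ht
  have hφeq : φ t = φ' t := le_antisymm h1 h2
  refine ⟨hφeq, ?_⟩
  have e1 := (h.1 t ht).1
  have e2 := (h'.1 t ht).1
  linarith
end

section
/- If (φ, η) solves the extended Skorokhod problem on [ℓ(·), r(·)] for ψ and η has finite variation on every bounded interval, then (φ, η) solves the Skorokhod problem on [ℓ(·), r(·)] for ψ, i.e., η decomposes as η_ℓ − η_r with η_ℓ, η_r nondecreasing, η_ℓ increasing only when φ = ℓ and η_r increasing only when φ = r. -/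
open Set Filter

/-- `(φ, η)` solves the extended Skorokhod problem (ESP) on the time-dependent
interval `[ℓ(·), r(·)]` for the input `ψ`. -/
def ESP (l r ψ φ η : ℝ → ℝ) : Prop :=
  (∀ t : ℝ, 0 ≤ t → φ t = ψ t + η t ∧ l t ≤ φ t ∧ φ t ≤ r t) ∧
  (∀ s t : ℝ, 0 ≤ s → s ≤ t → (∀ u, s < u → u ≤ t → φ u < r u) → η s ≤ η t) ∧
  (∀ s t : ℝ, 0 ≤ s → s ≤ t → (∀ u, s < u → u ≤ t → l u < φ u) → η t ≤ η s) ∧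
  (∀ t : ℝ, 0 < t →
    (φ t < r t → Function.leftLim η t ≤ η t) ∧
    (l t < φ t → η t ≤ Function.leftLim η t)) ∧
  ((φ 0 < r 0 → 0 ≤ η 0) ∧ (l 0 < φ 0 → η 0 ≤ 0))

/-- `(φ, η)` together with the pair of nondecreasing right-continuous constraining
processes `(η_ℓ, η_r)` solves the Skorokhod problem (SP) on `[ℓ(·), r(·)]` for `ψ`:
`φ = ψ + η ∈ [ℓ, r]`, `η = η_ℓ - η_r`, and the Lebesgue–Stieltjes measures of
`η_ℓ` and `η_r` do not charge `{φ > ℓ}` and `{φ < r}` respectively. -/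
def SPwith (l r ψ φ η : ℝ → ℝ) (ηl ηr : StieltjesFunction ℝ) : Prop :=
  (∀ t : ℝ, 0 ≤ t → φ t = ψ t + η t ∧ l t ≤ φ t ∧ φ t ≤ r t) ∧
  (∀ t : ℝ, 0 ≤ t → η t = ηl t - ηr t) ∧
  ηl.measure {s : ℝ | 0 ≤ s ∧ l s < φ s} = 0 ∧
  ηr.measure {s : ℝ | 0 ≤ s ∧ φ s < r s} = 0

/-- `(φ, η)` solves the Skorokhod problem on `[ℓ(·), r(·)]` for `ψ`. -/
def SP (l r ψ φ η : ℝ → ℝ) : Prop :=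
  ∃ ηl ηr : StieltjesFunction ℝ, SPwith l r ψ φ η ηl ηr

section AuxESP
open Function MeasureTheory


lemma eVariationOn_neg (f : ℝ → ℝ) (s : Set ℝ) :
    eVariationOn (fun x => -f x) s = eVariationOn f s := by
  simp only [eVariationOn]
  congr 1
  funext p
  exact Finset.sum_congr rfl fun i _ => edist_neg_neg _ _

lemma evar_Icc_le (η : ℝ → ℝ) {u s L ε : ℝ} (hus : u < s) (hu : 0 ≤ u)
    (hfin : ∀ a b : ℝ, 0 ≤ a → eVariationOn η (Set.Icc a b) ≠ ⊤) (hε : 0 < ε)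
    (hsmall : ∀ x, u ≤ x → x < s → (eVariationOn η (Set.Icc u x)).toReal ≤ ε)
    (hclose : ∀ x, u ≤ x → x < s → |η x - L| ≤ ε) :
    eVariationOn η (Set.Icc u s) ≤ ENNReal.ofReal (|η s - L| + 2 * ε) := by
  apply iSup_le
  rintro ⟨N, t, ht, hts⟩
  have hex : ∃ m, m = N ∨ (m < N ∧ s ≤ t (m + 1)) := ⟨N, Or.inl rfl⟩
  set m := Nat.find hex with hm_def
  have hmN : m ≤ N := Nat.find_le (Or.inl rfl)
  have hlt : ∀ i, i < m → t (i + 1) < s := by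
    intro i hi
    have hmin := Nat.find_min hex hi
    push_neg at hmin
    exact hmin.2 (hi.trans_le hmN)
  have hge : ∀ i, m ≤ i → i < N → t (i + 1) = s := by
    intro i hmi hiN
    rcases Nat.find_spec hex with hcase | ⟨_, hcase⟩
    · exact absurd hiN (by omega)
    · exact le_antisymm (hts (i + 1)).2 (hcase.trans (ht (by omega)))
  have hsplit : ∑ i ∈ Finset.range N, edist (η (t (i + 1))) (η (t i))
      = ∑ i ∈ Finset.range m, edist (η (t (i + 1))) (η (t i))
        + ∑ i ∈ Finset.Ico m N, edist (η (t (i + 1))) (η (t i)) := by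
    rw [Finset.range_eq_Ico, Finset.range_eq_Ico]
    exact (Finset.sum_Ico_consecutive (fun i => edist (η (t (i + 1))) (η (t i))) (Nat.zero_le m) hmN).symm
  have hfirst : ∑ i ∈ Finset.range m, edist (η (t (i + 1))) (η (t i))
      ≤ ENNReal.ofReal ε := by
    rcases Nat.eq_zero_or_pos m with hm0 | hm0
    · simp [hm0]
    · have htm : t m < s := by
        have := hlt (m - 1) (by omega)
        have he : m - 1 + 1 = m := by omega
        rwa [he] at this
      have hmono : Monotone fun i => t (min i m) := fun a b hab => ht (min_le_min hab le_rfl)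
      have hmem : ∀ i, t (min i m) ∈ Set.Icc u (t m) := fun i =>
        ⟨(hts _).1, ht (min_le_right _ _)⟩
      have hsle := eVariationOn.sum_le (f := η) (n := m) hmono hmem
      have heq : ∑ i ∈ Finset.range m, edist (η (t (min (i + 1) m))) (η (t (min i m)))
          = ∑ i ∈ Finset.range m, edist (η (t (i + 1))) (η (t i)) := by
        refine Finset.sum_congr rfl fun i hi => ?_
        have hi' := Finset.mem_range.mp hi
        rw [min_eq_left (by omega), min_eq_left (by omega)]
      rw [heq] at hsle
      refine hsle.trans ?_
      rw [← ENNReal.ofReal_toReal (hfin u (t m) hu)]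
      exact ENNReal.ofReal_le_ofReal (hsmall (t m) (hts m).1 htm)
  have hsnd : ∑ i ∈ Finset.Ico m N, edist (η (t (i + 1))) (η (t i))
      ≤ ENNReal.ofReal (|η s - L| + ε) := by
    rcases eq_or_lt_of_le hmN with hmN' | hmN'
    · rw [hmN', Finset.Ico_self, Finset.sum_empty]; exact zero_le
    · rw [Finset.sum_eq_sum_Ico_succ_bot hmN']
      have hts1 : t (m + 1) = s := hge m le_rfl hmN'
      have hrest : ∑ i ∈ Finset.Ico (m + 1) N, edist (η (t (i + 1))) (η (t i)) = 0 := by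
        refine Finset.sum_eq_zero fun i hi => ?_
        obtain ⟨hi1, hi2⟩ := Finset.mem_Ico.mp hi
        have e1 : t (i + 1) = s := hge i (by omega) hi2
        have e2 : t i = s := by
          have := hge (i - 1) (by omega) (by omega)
          have he : i - 1 + 1 = i := by omega
          rwa [he] at this
        rw [e1, e2, edist_self]
      rw [hrest, add_zero, hts1]
      rcases lt_or_ge (t m) s with htm | htm
      · have e1 : edist (η s) (η (t m)) ≤ edist (η s) L + edist L (η (t m)) :=
          edist_triangle _ _ _
        have e2 : edist (η s) L = ENNReal.ofReal |η s - L| := by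
          rw [edist_dist, Real.dist_eq]
        have e3 : edist L (η (t m)) ≤ ENNReal.ofReal ε := by
          rw [edist_dist, Real.dist_eq]
          refine ENNReal.ofReal_le_ofReal ?_
          rw [abs_sub_comm]
          exact hclose (t m) (hts m).1 htm
        calc edist (η s) (η (t m)) ≤ edist (η s) L + edist L (η (t m)) := e1
          _ ≤ ENNReal.ofReal |η s - L| + ENNReal.ofReal ε := add_le_add (le_of_eq e2) e3
          _ = ENNReal.ofReal (|η s - L| + ε) := (ENNReal.ofReal_add (abs_nonneg _) hε.le).symm
      · have : t m = s := le_antisymm (hts m).2 htm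
        rw [this, edist_self]
        exact zero_le
  calc ∑ i ∈ Finset.range N, edist (η (t (i + 1))) (η (t i))
      = _ + _ := hsplit
    _ ≤ ENNReal.ofReal ε + ENNReal.ofReal (|η s - L| + ε) := add_le_add hfirst hsnd
    _ = ENNReal.ofReal (|η s - L| + 2 * ε) := by
        rw [← ENNReal.ofReal_add hε.le (by positivity)]
        congr 1
        ring

open Set Filter Function MeasureTheory

lemma var_jump (η : ℝ → ℝ) (hfin : ∀ a b : ℝ, 0 ≤ a → eVariationOn η (Set.Icc a b) ≠ ⊤)
    {s L : ℝ} (hs : 0 < s) (hL : Filter.Tendsto η (nhdsWithin s (Set.Iio s)) (nhds L))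
    {v : ℝ → ℝ} (hvm : Monotone v)
    (hv : ∀ a b : ℝ, 0 ≤ a → a ≤ b → v b - v a = (eVariationOn η (Set.Icc a b)).toReal) :
    v s - Function.leftLim v s ≤ |η s - L| := by
  by_contra hcon
  push_neg at hcon
  set M := Function.leftLim v s with hM_def
  set ε := (v s - M - |η s - L|) / 3 with hε_def
  have hε : 0 < ε := by
    have : 0 < v s - M - |η s - L| := by linarith
    positivity
  have h1 : ∀ᶠ x in nhdsWithin s (Set.Iio s), dist (v x) M < ε / 2 :=
    Metric.tendsto_nhds.mp (hvm.tendsto_leftLim s) (ε / 2) (by positivity)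
  have h2 : ∀ᶠ x in nhdsWithin s (Set.Iio s), dist (η x) L < ε :=
    Metric.tendsto_nhds.mp hL ε hε
  have H := h1.and h2
  obtain ⟨a, ha, hsub⟩ := (mem_nhdsLT_iff_exists_Ioo_subset'
    (show s - 1 < s by linarith)).mp H
  have has : a < s := ha
  set u := max ((a + s) / 2) 0 with hu_def
  have hu0 : 0 ≤ u := le_max_right _ _
  have hus : u < s := max_lt (by linarith) hs
  have hua : a < u := by
    rcases le_or_gt 0 a with h0 | h0
    · exact lt_of_lt_of_le (by linarith) (le_max_left _ _)
    · exact lt_of_lt_of_le h0 hu0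
  have hmem : ∀ x, u ≤ x → x < s → x ∈ Set.Ioo a s := fun x hx1 hx2 => ⟨hua.trans_le hx1, hx2⟩
  have hsmall : ∀ x, u ≤ x → x < s → (eVariationOn η (Set.Icc u x)).toReal ≤ ε := by
    intro x hx1 hx2
    rw [← hv u x hu0 hx1]
    have e1 := (hsub (hmem x hx1 hx2)).1
    have e2 := (hsub (hmem u le_rfl hus)).1
    rw [Real.dist_eq] at e1 e2
    have := abs_lt.mp e1
    have := abs_lt.mp e2
    linarith [(abs_lt.mp e1).2, (abs_lt.mp e2).2, (abs_lt.mp e1).1, (abs_lt.mp e2).1]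
  have hclose : ∀ x, u ≤ x → x < s → |η x - L| ≤ ε := by
    intro x hx1 hx2
    have := (hsub (hmem x hx1 hx2)).2
    rw [Real.dist_eq] at this
    exact this.le
  have hkey := evar_Icc_le η hus hu0 hfin hε hsmall hclose
  have h3 : v s - v u ≤ |η s - L| + 2 * ε := by
    rw [hv u s hu0 hus.le]
    have := ENNReal.toReal_mono ENNReal.ofReal_ne_top hkey
    rwa [ENNReal.toReal_ofReal (by positivity)] at this
  have h4 : v u ≤ M := hvm.le_leftLim hus
  linarith

lemma stieltjes_measure_null {m : ℝ → ℝ} (hm : Monotone m) {A : Set ℝ}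
    (h : ∀ s ∈ A, Function.leftLim m s = m s ∧
      ∃ δ : ℝ, 0 < δ ∧ ∀ x ∈ Set.Ico s (s + δ), m x = m s) :
    hm.stieltjesFunction.measure A = 0 := by
  classical
  have key : ∀ s ∈ A, ∃ b, s < b ∧ hm.stieltjesFunction.measure (Set.Ico s b) = 0 := by
    intro s hs
    obtain ⟨hleft, δ, hδ, hconst⟩ := h s hs
    have hfx : ∀ x ∈ Set.Ico s (s + δ), hm.stieltjesFunction x = m s := by
      intro x hx
      rw [hm.stieltjesFunction_eq]
      apply rightLim_eq_of_tendsto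
      refine Filter.Tendsto.congr' ?_ tendsto_const_nhds
      filter_upwards [Ioo_mem_nhdsGT_of_mem ⟨le_rfl, hx.2⟩] with y hy
      exact (hconst y ⟨hx.1.trans hy.1.le, hy.2⟩).symm
    have h1 : Function.leftLim (hm.stieltjesFunction) (s + δ) = m s := by
      apply leftLim_eq_of_tendsto
      refine Filter.Tendsto.congr' ?_ tendsto_const_nhds
      filter_upwards [Ioo_mem_nhdsLT_of_mem
        (show s + δ ∈ Set.Ioc s (s + δ) from ⟨by linarith, le_rfl⟩)] with y hy
      exact (hfx y ⟨hy.1.le, hy.2⟩).symm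
    have h2 : Function.leftLim (hm.stieltjesFunction) s = m s := by
      apply leftLim_eq_of_tendsto
      have hmt : Filter.Tendsto m (nhdsWithin s (Set.Iio s)) (nhds (m s)) :=
        hleft ▸ hm.tendsto_leftLim s
      refine tendsto_of_tendsto_of_tendsto_of_le_of_le' hmt tendsto_const_nhds ?_ ?_
      · filter_upwards [self_mem_nhdsWithin] with x _
        rw [hm.stieltjesFunction_eq]
        exact hm.le_rightLim le_rfl
      · filter_upwards [self_mem_nhdsWithin] with x hx
        rw [hm.stieltjesFunction_eq]
        exact hm.rightLim_le hx
    refine ⟨s + δ, by linarith, ?_⟩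
    rw [StieltjesFunction.measure_Ico, h1, h2, sub_self, ENNReal.ofReal_zero]
  choose! b hb1 hb2 using key
  set f := hm.stieltjesFunction with hf_def
  set U : Set ℝ := ⋃ s ∈ A, Set.Ioo s (b s) with hU_def
  have hUnull : f.measure U = 0 := by
    have hrw : U = ⋃ i : A, Set.Ioo (i : ℝ) (b i) := by
      rw [hU_def, Set.biUnion_eq_iUnion]
    rw [hrw]
    obtain ⟨T, hTc, hTU⟩ := TopologicalSpace.isOpen_iUnion_countable
      (fun i : A => Set.Ioo (i : ℝ) (b i)) (fun i => isOpen_Ioo)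
    rw [← hTU, measure_biUnion_null_iff hTc]
    intro i _
    exact measure_mono_null Set.Ioo_subset_Ico_self (hb2 i i.2)
  have hDc : (A \ U).Countable := by
    have hq : ∀ s ∈ A \ U, ∃ qs : ℚ, s < (qs : ℝ) ∧ (qs : ℝ) < b s := by
      intro s hs; exact exists_rat_btwn (hb1 s hs.1)
    choose! q hq1 hq2 using hq
    have key2 : ∀ s ∈ A \ U, ∀ s' ∈ A \ U, s < s' → (q s : ℝ) < (q s' : ℝ) := by
      intro s hs s' hs' hss
      have hnotin : s' ∉ Set.Ioo s (b s) := fun hmem => hs'.2 (Set.mem_biUnion hs.1 hmem)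
      have hbs : b s ≤ s' := by
        by_contra hcon
        push_neg at hcon
        exact hnotin ⟨hss, hcon⟩
      exact (hq2 s hs).trans_le (hbs.trans (hq1 s' hs').le)
    have hinj : Set.InjOn q (A \ U) := by
      intro s hs s' hs' heq
      by_contra hne
      rcases lt_or_gt_of_ne hne with hlt | hlt
      · exact absurd (congrArg (fun x : ℚ => (x : ℝ)) heq) (ne_of_lt (key2 s hs s' hs' hlt))
      · exact absurd (congrArg (fun x : ℚ => (x : ℝ)) heq) (ne_of_gt (key2 s' hs' s hs hlt))
    exact Set.countable_of_injective_of_countable_image hinj (Set.to_countable _)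
  have hDnull : f.measure (A \ U) = 0 := by
    have hrw : A \ U = ⋃ x ∈ A \ U, ({x} : Set ℝ) := (Set.biUnion_of_singleton _).symm
    rw [hrw, measure_biUnion_null_iff hDc]
    intro x hx
    exact measure_mono_null (Set.singleton_subset_iff.mpr (Set.mem_Ico.mpr ⟨le_rfl, hb1 x hx.1⟩)) (hb2 x hx.1)
  have hsub : A ⊆ U ∪ (A \ U) := fun x hx => by
    by_cases hxU : x ∈ U
    · exact Or.inl hxU
    · exact Or.inr ⟨hx, hxU⟩
  refine le_antisymm ?_ zero_le
  calc f.measure A ≤ f.measure (U ∪ (A \ U)) := measure_mono hsub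
    _ ≤ f.measure U + f.measure (A \ U) := measure_union_le _ _
    _ = 0 := by rw [hUnull, hDnull, add_zero]

end AuxESP

open Function MeasureTheory in
/-- If `(φ, η)` solves the extended Skorokhod problem on `[ℓ(·), r(·)]` for `ψ` and `η`
has finite (bounded) variation on every bounded interval, then `(φ, η)` solves the
Skorokhod problem: `η` decomposes as `η_ℓ - η_r` with `η_ℓ, η_r` nondecreasing,
`η_ℓ` increasing only when `φ = ℓ` and `η_r` increasing only when `φ = r`. -/
theorem esp_bv_solves_sp (l r ψ φ η : ℝ → ℝ)
    (hl : Cadlag l) (hr : Cadlag r) (hlr : ∀ t : ℝ, 0 ≤ t → l t ≤ r t)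
    (hψ : Cadlag ψ) (hφ : Cadlag φ) (hη : Cadlag η)
    (h : ESP l r ψ φ η)
    (hbv : ∀ T : ℝ, 0 < T → BoundedVariationOn η (Set.Icc 0 T)) :
    SP l r ψ φ η := by
  obtain ⟨hesp1, hesp2, hesp3, hesp4, hesp5⟩ := h
  have hfin : ∀ a b : ℝ, 0 ≤ a → eVariationOn η (Set.Icc a b) ≠ ⊤ := by
    intro a b ha
    have hsub : Set.Icc a b ⊆ Set.Icc 0 (max b 1) := fun x hx =>
      ⟨ha.trans hx.1, hx.2.trans (le_max_left _ _)⟩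
    exact ne_top_of_le_ne_top (hbv (max b 1) (lt_of_lt_of_le one_pos (le_max_right _ _)))
      (eVariationOn.mono η hsub)
  have hlbv : LocallyBoundedVariationOn η (Set.Ici 0) := by
    intro a b ha hb
    exact ne_top_of_le_ne_top (hfin a b ha) (eVariationOn.mono η Set.inter_subset_right)
  set v : ℝ → ℝ := fun t => variationOnFromTo η (Set.Ici 0) 0 (max t 0) with hv_def
  have hv : ∀ a b : ℝ, 0 ≤ a → a ≤ b →
      v b - v a = (eVariationOn η (Set.Icc a b)).toReal := by
    intro a b ha hab
    have hb : (0 : ℝ) ≤ b := ha.trans hab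
    have hadd := variationOnFromTo.add hlbv (Set.mem_Ici.mpr le_rfl)
      (Set.mem_Ici.mpr ha) (Set.mem_Ici.mpr hb)
    have hIcc : Set.Ici 0 ∩ Set.Icc a b = Set.Icc a b :=
      Set.inter_eq_self_of_subset_right fun x hx => ha.trans hx.1
    simp only [hv_def, max_eq_left ha, max_eq_left hb]
    rw [← hadd, variationOnFromTo.eq_of_le η _ hab, hIcc]
    ring
  have hvm : Monotone v := by
    intro s t hst
    simp only [hv_def]
    exact variationOnFromTo.monotoneOn hlbv (Set.mem_Ici.mpr le_rfl)
      (Set.mem_Ici.mpr (le_max_right s 0)) (Set.mem_Ici.mpr (le_max_right t 0))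
      (max_le_max hst le_rfl)
  have hvmax : ∀ t : ℝ, v (max t 0) = v t := by
    intro t
    simp only [hv_def]
    rw [max_eq_left (le_max_right t 0)]
  have hdist : ∀ a b : ℝ, 0 ≤ a → a ≤ b → |η b - η a| ≤ v b - v a := by
    intro a b ha hab
    rw [hv a b ha hab]
    have h1 : edist (η b) (η a) ≤ eVariationOn η (Set.Icc a b) :=
      eVariationOn.edist_le η (Set.mem_Icc.mpr ⟨hab, le_rfl⟩) (Set.mem_Icc.mpr ⟨le_rfl, hab⟩)
    have h2 := ENNReal.toReal_mono (hfin a b ha) h1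
    rwa [edist_dist, ENNReal.toReal_ofReal dist_nonneg, Real.dist_eq] at h2
  set p : ℝ → ℝ := fun t => (v t + η (max t 0)) / 2 with hp_def
  set n : ℝ → ℝ := fun t => (v t - η (max t 0)) / 2 with hn_def
  have hpm : Monotone p := by
    intro s t hst
    have hab : max s 0 ≤ max t 0 := max_le_max hst le_rfl
    have hd := hdist (max s 0) (max t 0) (le_max_right s 0) hab
    have h3 : η (max s 0) - η (max t 0) ≤ |η (max t 0) - η (max s 0)| := by
      rw [abs_sub_comm]
      exact le_abs_self _
    simp only [hp_def]
    rw [← hvmax s, ← hvmax t]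
    linarith
  have hnm : Monotone n := by
    intro s t hst
    have hab : max s 0 ≤ max t 0 := max_le_max hst le_rfl
    have hd := hdist (max s 0) (max t 0) (le_max_right s 0) hab
    have h3 : η (max t 0) - η (max s 0) ≤ |η (max t 0) - η (max s 0)| := le_abs_self _
    simp only [hn_def]
    rw [← hvmax s, ← hvmax t]
    linarith
  -- constancy of p on intervals where η is antitone
  have hpconst : ∀ a x : ℝ, 0 ≤ a → a ≤ x →
      (∀ y z : ℝ, a ≤ y → y ≤ z → z ≤ x → η z ≤ η y) → p x = p a := by
    intro a x ha hax hanti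
    have hmono : MonotoneOn (fun y => -η y) (Set.Icc a x) := by
      intro y hy z hz hyz
      simp only [neg_le_neg_iff]
      exact hanti y z hy.1 hyz hz.2
    have h1 := hmono.eVariationOn_le (Set.left_mem_Icc.mpr hax) (Set.right_mem_Icc.mpr hax)
    rw [Set.inter_self, eVariationOn_neg] at h1
    have hxa : η x ≤ η a := hanti a x le_rfl hax le_rfl
    have h1' : eVariationOn η (Set.Icc a x) ≤ ENNReal.ofReal (η a - η x) := by
      convert h1 using 2
      ring
    have h3 := ENNReal.toReal_mono ENNReal.ofReal_ne_top h1'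
    rw [ENNReal.toReal_ofReal (by linarith)] at h3
    have h2 : v x - v a ≤ η a - η x := by
      rw [hv a x ha hax]
      exact h3
    have hle : p x ≤ p a := by
      simp only [hp_def]
      rw [max_eq_left (ha.trans hax), max_eq_left ha]
      linarith
    exact le_antisymm hle (hpm hax)
  have hnconst : ∀ a x : ℝ, 0 ≤ a → a ≤ x →
      (∀ y z : ℝ, a ≤ y → y ≤ z → z ≤ x → η y ≤ η z) → n x = n a := by
    intro a x ha hax hmono'
    have hmono : MonotoneOn η (Set.Icc a x) := fun y hy z hz hyz =>
      hmono' y z hy.1 hyz hz.2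
    have h1 := hmono.eVariationOn_le (Set.left_mem_Icc.mpr hax) (Set.right_mem_Icc.mpr hax)
    rw [Set.inter_self] at h1
    have hxa : η a ≤ η x := hmono' a x le_rfl hax le_rfl
    have h3 := ENNReal.toReal_mono ENNReal.ofReal_ne_top h1
    rw [ENNReal.toReal_ofReal (by linarith)] at h3
    have h2 : v x - v a ≤ η x - η a := by rw [hv a x ha hax]; exact h3
    have hle : n x ≤ n a := by
      simp only [hn_def]
      rw [max_eq_left (ha.trans hax), max_eq_left ha]
      linarith
    exact le_antisymm hle (hnm hax)
  -- left-continuity facts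
  have hleftlim : ∀ s : ℝ, 0 < s → ∃ L : ℝ,
      Filter.Tendsto η (nhdsWithin s (Set.Iio s)) (nhds L) ∧ Function.leftLim η s = L := by
    intro s hs
    obtain ⟨L, hL⟩ := (hη s hs.le).2 hs
    exact ⟨L, hL, leftLim_eq_of_tendsto hL⟩
  have hlp : ∀ s : ℝ, 0 < s → ∀ L : ℝ, Filter.Tendsto η (nhdsWithin s (Set.Iio s)) (nhds L) →
      Function.leftLim p s = (Function.leftLim v s + L) / 2 ∧
      Function.leftLim n s = (Function.leftLim v s - L) / 2 := by
    intro s hs L hL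
    constructor
    · apply leftLim_eq_of_tendsto
      have ht1 : Filter.Tendsto (fun x => (v x + η x) / 2) (nhdsWithin s (Set.Iio s))
          (nhds ((Function.leftLim v s + L) / 2)) := ((hvm.tendsto_leftLim s).add hL).div_const 2
      refine Filter.Tendsto.congr' ?_ ht1
      filter_upwards [Ioo_mem_nhdsLT_of_mem (show s ∈ Set.Ioc 0 s from ⟨hs, le_rfl⟩)] with x hx
      simp only [hp_def]
      rw [max_eq_left hx.1.le]
    · apply leftLim_eq_of_tendsto
      have ht1 : Filter.Tendsto (fun x => (v x - η x) / 2) (nhdsWithin s (Set.Iio s))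
          (nhds ((Function.leftLim v s - L) / 2)) := ((hvm.tendsto_leftLim s).sub hL).div_const 2
      refine Filter.Tendsto.congr' ?_ ht1
      filter_upwards [Ioo_mem_nhdsLT_of_mem (show s ∈ Set.Ioc 0 s from ⟨hs, le_rfl⟩)] with x hx
      simp only [hn_def]
      rw [max_eq_left hx.1.le]
  -- zero-case constancy
  have hzero : ∀ x : ℝ, x ≤ 0 → p x = p 0 ∧ n x = n 0 := by
    intro x hx
    refine ⟨?_, ?_⟩
    · simp only [hp_def, hv_def]
      rw [max_eq_right hx, max_self]
    · simp only [hn_def, hv_def]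
      rw [max_eq_right hx, max_self]
  have hpleft0 : Function.leftLim p 0 = p 0 := by
    apply leftLim_eq_of_tendsto
    refine Filter.Tendsto.congr' ?_ tendsto_const_nhds
    filter_upwards [self_mem_nhdsWithin] with x hx
    exact ((hzero x (le_of_lt hx)).1).symm
  have hnleft0 : Function.leftLim n 0 = n 0 := by
    apply leftLim_eq_of_tendsto
    refine Filter.Tendsto.congr' ?_ tendsto_const_nhds
    filter_upwards [self_mem_nhdsWithin] with x hx
    exact ((hzero x (le_of_lt hx)).2).symm
  -- left continuity of p at points of the lower set
  have hpleft : ∀ s : ℝ, 0 ≤ s → l s < φ s → Function.leftLim p s = p s := by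
    intro s hs0 hslφ
    rcases eq_or_lt_of_le hs0 with hs | hs
    · rw [← hs]
      exact hpleft0
    · obtain ⟨L, hL, hleftη⟩ := hleftlim s hs
      have hjump : η s ≤ L := hleftη ▸ (hesp4 s hs).2 hslφ
      have hvj := var_jump η hfin hs hL hvm hv
      have habs : |η s - L| = L - η s := by
        rw [abs_of_nonpos (by linarith)]
        ring
      have hlps := (hlp s hs L hL).1
      have hps : p s = (v s + η s) / 2 := by
        simp only [hp_def]
        rw [max_eq_left hs0]
      have hlle : Function.leftLim p s ≤ p s := hpm.leftLim_le le_rfl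
      rw [hlps] at hlle ⊢
      rw [hps] at hlle ⊢
      have hvj' : v s - Function.leftLim v s ≤ L - η s := habs ▸ hvj
      linarith
  have hnleft : ∀ s : ℝ, 0 ≤ s → φ s < r s → Function.leftLim n s = n s := by
    intro s hs0 hsφr
    rcases eq_or_lt_of_le hs0 with hs | hs
    · rw [← hs]
      exact hnleft0
    · obtain ⟨L, hL, hleftη⟩ := hleftlim s hs
      have hjump : L ≤ η s := hleftη ▸ (hesp4 s hs).1 hsφr
      have hvj := var_jump η hfin hs hL hvm hv
      have habs : |η s - L| = η s - L := abs_of_nonneg (by linarith)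
      have hlns := (hlp s hs L hL).2
      have hns : n s = (v s - η s) / 2 := by
        simp only [hn_def]
        rw [max_eq_left hs0]
      have hlle : Function.leftLim n s ≤ n s := hnm.leftLim_le le_rfl
      rw [hlns] at hlle ⊢
      rw [hns] at hlle ⊢
      have hvj' : v s - Function.leftLim v s ≤ η s - L := habs ▸ hvj
      linarith
  -- right local constancy
  have hpA : ∀ s : ℝ, 0 ≤ s → l s < φ s →
      ∃ δ : ℝ, 0 < δ ∧ ∀ x ∈ Set.Ico s (s + δ), p x = p s := by
    intro s hs0 hsl
    have hsub : ContinuousWithinAt (fun x => φ x - l x) (Set.Ici s) s :=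
      ((hφ s hs0).1).sub ((hl s hs0).1)
    have hpos : ∀ᶠ x in nhdsWithin s (Set.Ici s), 0 < φ x - l x :=
      hsub.eventually (eventually_gt_nhds (sub_pos.mpr hsl))
    obtain ⟨u', hu', hsub2⟩ := (mem_nhdsGE_iff_exists_Ico_subset'
      (show s < s + 1 by linarith)).mp hpos
    refine ⟨u' - s, by linarith [Set.mem_Ioi.mp hu'], ?_⟩
    intro x hx
    have hxu : x < u' := by linarith [hx.2]
    apply hpconst s x hs0 hx.1
    intro y z hy hyz hzx
    refine hesp3 y z (hs0.trans hy) hyz fun w hw1 hw2 => ?_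
    have hw : w ∈ Set.Ico s u' := ⟨hy.trans hw1.le, lt_of_le_of_lt (hw2.trans hzx) hxu⟩
    exact sub_pos.mp (hsub2 hw)
  have hnA : ∀ s : ℝ, 0 ≤ s → φ s < r s →
      ∃ δ : ℝ, 0 < δ ∧ ∀ x ∈ Set.Ico s (s + δ), n x = n s := by
    intro s hs0 hsl
    have hsub : ContinuousWithinAt (fun x => r x - φ x) (Set.Ici s) s :=
      ((hr s hs0).1).sub ((hφ s hs0).1)
    have hpos : ∀ᶠ x in nhdsWithin s (Set.Ici s), 0 < r x - φ x :=
      hsub.eventually (eventually_gt_nhds (sub_pos.mpr hsl))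
    obtain ⟨u', hu', hsub2⟩ := (mem_nhdsGE_iff_exists_Ico_subset'
      (show s < s + 1 by linarith)).mp hpos
    refine ⟨u' - s, by linarith [Set.mem_Ioi.mp hu'], ?_⟩
    intro x hx
    have hxu : x < u' := by linarith [hx.2]
    apply hnconst s x hs0 hx.1
    intro y z hy hyz hzx
    refine hesp2 y z (hs0.trans hy) hyz fun w hw1 hw2 => ?_
    have hw : w ∈ Set.Ico s u' := ⟨hy.trans hw1.le, lt_of_le_of_lt (hw2.trans hzx) hxu⟩
    exact sub_pos.mp (hsub2 hw)
  -- decomposition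
  have hdecomp : ∀ t : ℝ, 0 ≤ t → η t = hpm.stieltjesFunction t - hnm.stieltjesFunction t := by
    intro t ht
    rw [hpm.stieltjesFunction_eq, hnm.stieltjesFunction_eq]
    have h1 : Filter.Tendsto p (nhdsWithin t (Set.Ioi t)) (nhds (Function.rightLim p t)) :=
      hpm.tendsto_rightLim t
    have h2 : Filter.Tendsto n (nhdsWithin t (Set.Ioi t)) (nhds (Function.rightLim n t)) :=
      hnm.tendsto_rightLim t
    have h3 : Filter.Tendsto (fun x => p x - n x) (nhdsWithin t (Set.Ioi t))
        (nhds (Function.rightLim p t - Function.rightLim n t)) := h1.sub h2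
    have h4 : Filter.Tendsto (fun x => p x - n x) (nhdsWithin t (Set.Ioi t)) (nhds (η t)) := by
      have hc : Filter.Tendsto η (nhdsWithin t (Set.Ici t)) (nhds (η t)) := (hη t ht).1
      have hc2 : Filter.Tendsto η (nhdsWithin t (Set.Ioi t)) (nhds (η t)) :=
        hc.mono_left (nhdsWithin_mono t Set.Ioi_subset_Ici_self)
      refine Filter.Tendsto.congr' ?_ hc2
      filter_upwards [self_mem_nhdsWithin] with x hx
      simp only [hp_def, hn_def]
      rw [max_eq_left (ht.trans (le_of_lt hx))]
      ring
    exact tendsto_nhds_unique h4 h3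
  refine ⟨hpm.stieltjesFunction, hnm.stieltjesFunction, hesp1, hdecomp, ?_, ?_⟩
  · apply stieltjes_measure_null hpm
    intro s hs
    exact ⟨hpleft s hs.1 hs.2, hpA s hs.1 hs.2⟩
  · apply stieltjes_measure_null hnm
    intro s hs
    exact ⟨hnleft s hs.1 hs.2, hnA s hs.1 hs.2⟩
end

section
/- If inf_{t≥0} (r(t) − ℓ(t)) > 0 and (φ, η) solves the extended Skorokhod problem on [ℓ(·), r(·)] for ψ, then η has finite variation on every bounded time interval, and hence (φ, η) solves the Skorokhod problem on [ℓ(·), r(·)] for ψ. -/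
open Set Filter Function

open scoped Classical Topology

structure SkoCtx where
  l : ℝ → ℝ
  r : ℝ → ℝ
  φ : ℝ → ℝ
  η : ℝ → ℝ
  ε : ℝ
  εpos : 0 < ε
  sep : ∀ t, 0 ≤ t → ε ≤ r t - l t
  cl : Cadlag l
  cr : Cadlag r
  cφ : Cadlag φ
  cη : Cadlag η
  bdd : ∀ t, 0 ≤ t → l t ≤ φ t ∧ φ t ≤ r t
  mono2 : ∀ s t, 0 ≤ s → s ≤ t → (∀ u, s < u → u ≤ t → φ u < r u) → η s ≤ η t
  mono3 : ∀ s t, 0 ≤ s → s ≤ t → (∀ u, s < u → u ≤ t → l u < φ u) → η t ≤ η s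
  jump4 : ∀ t, 0 < t → (φ t < r t → Function.leftLim η t ≤ η t) ∧
      (l t < φ t → η t ≤ Function.leftLim η t)

namespace SkoCtx

variable (c : SkoCtx)

lemma dichot (t : ℝ) (ht : 0 ≤ t) : c.φ t < c.r t ∨ c.l t < c.φ t := by
  rcases c.bdd t ht with ⟨h1, h2⟩
  have := c.sep t ht
  have := c.εpos
  by_contra hc
  push_neg at hc
  linarith [hc.1, hc.2]

/-- right-side strict inequality propagates to a right neighborhood -/
lemma ev_right {f g : ℝ → ℝ} (hf : Cadlag f) (hg : Cadlag g) (t : ℝ) (ht : 0 ≤ t)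
    (h : f t < g t) : ∃ δ > 0, ∀ u, t ≤ u → u < t + δ → f u < g u := by
  have hcont : ContinuousWithinAt (fun u => g u - f u) (Ici t) t :=
    ((hg t ht).1.sub (hf t ht).1)
  have hev : ∀ᶠ u in 𝓝[Set.Ici t] t, 0 < g u - f u :=
    hcont.eventually (eventually_gt_nhds (show (0:ℝ) < g t - f t by linarith))
  rw [eventually_iff_exists_mem] at hev
  obtain ⟨s, hs, hsub⟩ := hev
  rw [mem_nhdsGE_iff_exists_Ico_subset] at hs
  obtain ⟨b, hb, hIco⟩ := hs
  refine ⟨b - t, by simpa using hb, fun u hu1 hu2 => ?_⟩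
  have : u ∈ Set.Ico t b := ⟨hu1, by linarith⟩
  have := hsub u (hIco this)
  linarith

lemma tendsto_leftLim' {f : ℝ → ℝ} (hf : Cadlag f) (t : ℝ) (ht : 0 < t) :
    Tendsto f (𝓝[<] t) (𝓝 (leftLim f t)) := by
  obtain ⟨y, hy⟩ := (hf t ht.le).2 ht
  have : leftLim f t = y := leftLim_eq_of_tendsto hy
  rw [this]; exact hy

/-- left-side strict inequality of left limits propagates to a left neighborhood -/
lemma ev_left {f g : ℝ → ℝ} (hf : Cadlag f) (hg : Cadlag g) (t : ℝ) (ht : 0 < t)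
    (h : leftLim f t < leftLim g t) : ∃ δ > 0, ∀ u, t - δ < u → u < t → f u < g u := by
  have hten : Tendsto (fun u => g u - f u) (𝓝[<] t) (𝓝 (leftLim g t - leftLim f t)) :=
    (tendsto_leftLim' hg t ht).sub (tendsto_leftLim' hf t ht)
  have hev : ∀ᶠ u in 𝓝[<] t, 0 < g u - f u :=
    hten.eventually (eventually_gt_nhds (by linarith))
  rw [eventually_iff_exists_mem] at hev
  obtain ⟨s, hs, hsub⟩ := hev
  rw [mem_nhdsLT_iff_exists_Ioo_subset] at hs
  obtain ⟨b, hb, hIoo⟩ := hs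
  refine ⟨t - b, by simpa using hb, fun u hu1 hu2 => ?_⟩
  have : u ∈ Set.Ioo b t := ⟨by linarith, hu2⟩
  have := hsub u (hIoo this)
  linarith

end SkoCtx
namespace SkoCtx
variable (c : SkoCtx)

def Good (a b : ℝ) : Prop :=
  (∀ u, a < u → u < b → c.φ u < c.r u) ∨ (∀ u, a < u → u < b → c.l u < c.φ u)

lemma Good.mono {c : SkoCtx} {a b a' b' : ℝ} (h : c.Good a b) (ha : a ≤ a') (hb : b' ≤ b) :
    c.Good a' b' := by
  rcases h with h | h
  · exact Or.inl fun u h1 h2 => h u (lt_of_le_of_lt ha h1) (lt_of_lt_of_le h2 hb)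
  · exact Or.inr fun u h1 h2 => h u (lt_of_le_of_lt ha h1) (lt_of_lt_of_le h2 hb)

def nextSet (a : ℝ) : Set ℝ := {b | a < b ∧ b ≤ a + 1 ∧ c.Good a b}

noncomputable def next (a : ℝ) : ℝ := sSup (c.nextSet a)

lemma nextSet_nonempty {a : ℝ} (ha : 0 ≤ a) : (c.nextSet a).Nonempty := by
  have hd := c.dichot a ha
  have : ∃ δ > 0, c.Good a (a + δ) := by
    rcases hd with h | h
    · obtain ⟨δ, hδ, hδ2⟩ := ev_right c.cφ c.cr a ha h
      exact ⟨δ, hδ, Or.inl fun u h1 h2 => hδ2 u h1.le h2⟩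
    · obtain ⟨δ, hδ, hδ2⟩ := ev_right c.cl c.cφ a ha h
      exact ⟨δ, hδ, Or.inr fun u h1 h2 => hδ2 u h1.le h2⟩
  obtain ⟨δ, hδ, hg⟩ := this
  refine ⟨a + min δ 1, lt_add_of_pos_right _ (by positivity), by
      simp [min_le_right δ 1], hg.mono le_rfl (by simp [min_le_left δ 1])⟩

lemma nextSet_bdd (a : ℝ) : BddAbove (c.nextSet a) :=
  ⟨a + 1, fun _ hb => hb.2.1⟩

lemma lt_next {a : ℝ} (ha : 0 ≤ a) : a < c.next a := by
  obtain ⟨b, hb⟩ := c.nextSet_nonempty ha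
  exact lt_of_lt_of_le hb.1 (le_csSup (c.nextSet_bdd a) hb)

lemma next_le {a : ℝ} (ha : 0 ≤ a) : c.next a ≤ a + 1 :=
  csSup_le (c.nextSet_nonempty ha) fun _ hb => hb.2.1

lemma good_next {a : ℝ} (ha : 0 ≤ a) : c.Good a (c.next a) := by
  by_cases hR : ∀ u, a < u → u < c.next a → c.φ u < c.r u
  · exact Or.inl hR
  push_neg at hR
  obtain ⟨u₀, hu₀1, hu₀2, hu₀3⟩ := hR
  refine Or.inr fun u h1 h2 => ?_
  obtain ⟨b, hb, hub⟩ := exists_lt_of_lt_csSup (c.nextSet_nonempty ha) h2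
  obtain ⟨b₀, hb₀, hub₀⟩ := exists_lt_of_lt_csSup (c.nextSet_nonempty ha) hu₀2
  have hmax : max b b₀ ∈ c.nextSet a := by
    rcases max_cases b b₀ with ⟨h, _⟩ | ⟨h, _⟩ <;> rw [h] <;> assumption
  rcases hmax.2.2 with h | h
  · exact absurd (h u₀ hu₀1 (lt_of_lt_of_le hub₀ (le_max_right _ _))) (not_lt.2 hu₀3)
  · exact h u h1 (lt_of_lt_of_le hub (le_max_left _ _))

noncomputable def seq (c : SkoCtx) : ℕ → ℝ
  | 0 => 0
  | k + 1 => c.next (seq c k)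

lemma seq_succ (k : ℕ) : c.seq (k + 1) = c.next (c.seq k) := by rw [seq]

lemma seq_nonneg_lt (k : ℕ) : 0 ≤ c.seq k ∧ c.seq k < c.seq (k + 1) := by
  induction k with
  | zero =>
    refine ⟨le_rfl, ?_⟩
    rw [c.seq_succ]; exact c.lt_next le_rfl
  | succ n ih =>
    refine ⟨ih.1.trans ih.2.le, ?_⟩
    rw [c.seq_succ (n+1)]
    exact c.lt_next (ih.1.trans ih.2.le)

lemma seq_nonneg (k : ℕ) : 0 ≤ c.seq k := (c.seq_nonneg_lt k).1

lemma seq_lt_succ (k : ℕ) : c.seq k < c.seq (k + 1) := (c.seq_nonneg_lt k).2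

lemma seq_strictMono : StrictMono c.seq := strictMono_nat_of_lt_succ c.seq_lt_succ

lemma seq_zero : c.seq 0 = 0 := rfl

lemma seq_succ_pos (k : ℕ) : 0 < c.seq (k + 1) := by
  have := c.seq_strictMono (Nat.zero_lt_succ k)
  rwa [c.seq_zero] at this

lemma good_seq (k : ℕ) : c.Good (c.seq k) (c.seq (k + 1)) := by
  rw [c.seq_succ]; exact c.good_next (c.seq_nonneg k)

/-- left-goodness at a positive point -/
lemma good_left {L : ℝ} (hL : 0 < L) : ∃ δ > 0, δ ≤ L ∧ c.Good (L - δ) L := by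
  have hIoo : Set.Ioo 0 L ∈ 𝓝[<] L := Ioo_mem_nhdsLT_of_mem ⟨hL, le_rfl⟩
  have h1 : leftLim c.l L ≤ leftLim c.φ L := by
    refine le_of_tendsto_of_tendsto (tendsto_leftLim' c.cl L hL)
      (tendsto_leftLim' c.cφ L hL) ?_
    filter_upwards [hIoo] with u hu using (c.bdd u hu.1.le).1
  have h2 : leftLim c.φ L ≤ leftLim c.r L := by
    refine le_of_tendsto_of_tendsto (tendsto_leftLim' c.cφ L hL)
      (tendsto_leftLim' c.cr L hL) ?_
    filter_upwards [hIoo] with u hu using (c.bdd u hu.1.le).2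
  have h3 : c.ε ≤ leftLim c.r L - leftLim c.l L := by
    have : Tendsto (fun u => c.r u - c.l u) (𝓝[<] L)
        (𝓝 (leftLim c.r L - leftLim c.l L)) :=
      (tendsto_leftLim' c.cr L hL).sub (tendsto_leftLim' c.cl L hL)
    refine ge_of_tendsto this ?_
    filter_upwards [hIoo] with u hu using c.sep u hu.1.le
  by_cases hc : leftLim c.φ L < leftLim c.r L
  · obtain ⟨δ, hδ, h⟩ := ev_left c.cφ c.cr L hL hc
    exact ⟨min δ L, by positivity, min_le_right _ _,
      Or.inl fun u h1 h2 => h u (by have := min_le_left δ L; linarith) h2⟩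
  · have : leftLim c.l L < leftLim c.φ L := by
      have := c.εpos; push_neg at hc; linarith
    obtain ⟨δ, hδ, h⟩ := ev_left c.cl c.cφ L hL this
    exact ⟨min δ L, by positivity, min_le_right _ _,
      Or.inr fun u h1 h2 => h u (by have := min_le_left δ L; linarith) h2⟩

lemma seq_tendsto : Tendsto c.seq atTop atTop := by
  rcases tendsto_of_monotone c.seq_strictMono.monotone with h | ⟨L, hL⟩
  · exact h
  exfalso
  have hle : ∀ k, c.seq k ≤ L := fun k => c.seq_strictMono.monotone.ge_of_tendsto hL k
  have hlt : ∀ k, c.seq k < L := fun k => lt_of_lt_of_le (c.seq_lt_succ k) (hle (k + 1))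
  have hLpos : 0 < L := lt_of_le_of_lt (le_of_eq c.seq_zero.symm) (hlt 0)
  obtain ⟨δ, hδ, hδL, hgood⟩ := c.good_left hLpos
  have hev : ∀ᶠ k in atTop, L - min δ 1 < c.seq k :=
    hL.eventually (eventually_gt_nhds (by
      have : (0:ℝ) < min δ 1 := by positivity
      linarith))
  obtain ⟨k, hk⟩ := hev.exists
  -- show next (seq k) ≥ L
  have hsub : Set.Ioo (c.seq k) L ⊆ c.nextSet (c.seq k) := by
    intro b hb
    have h1 : L < c.seq k + 1 := by have := min_le_right δ 1; linarith
    refine ⟨hb.1, by linarith [hb.2], ?_⟩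
    refine hgood.mono ?_ hb.2.le
    have := min_le_left δ 1; linarith
  have hnext : L ≤ c.next (c.seq k) := by
    by_contra hcon
    push_neg at hcon
    obtain ⟨b, hb1, hb2⟩ : ∃ b, max (c.seq k) (c.next (c.seq k)) < b ∧ b < L :=
      exists_between (by
        rcases max_cases (c.seq k) (c.next (c.seq k)) with ⟨h, _⟩ | ⟨h, _⟩ <;> rw [h]
        exacts [hlt k, hcon])
    have hbmem := hsub ⟨lt_of_le_of_lt (le_max_left _ _) hb1, hb2⟩
    have h3 : b ≤ c.next (c.seq k) := le_csSup (c.nextSet_bdd (c.seq k)) hbmem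
    have h2 := lt_of_le_of_lt (le_max_right (c.seq k) (c.next (c.seq k))) hb1
    linarith
  have : c.seq (k + 1) < L := hlt (k + 1)
  rw [c.seq_succ] at this
  linarith

end SkoCtx
namespace SkoCtx
variable (c : SkoCtx)

noncomputable def idx (t : ℝ) : ℕ := sSup {k | c.seq k < t}

lemma idx_set_nonempty {t : ℝ} (ht : 0 < t) : {k | c.seq k < t}.Nonempty :=
  ⟨0, by simpa [c.seq_zero] using ht⟩

lemma idx_set_bdd (t : ℝ) : BddAbove {k | c.seq k < t} := by
  obtain ⟨N, hN⟩ := (c.seq_tendsto.eventually_ge_atTop t).exists_forall_of_atTop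
  exact ⟨N, fun k hk => by
    by_contra hc
    push_neg at hc
    exact absurd (hN k hc.le) (not_le.2 hk)⟩

lemma idx_spec {t : ℝ} (ht : 0 < t) : c.seq (c.idx t) < t ∧ t ≤ c.seq (c.idx t + 1) := by
  constructor
  · exact Nat.sSup_mem (c.idx_set_nonempty ht) (c.idx_set_bdd t)
  · by_contra hc
    push_neg at hc
    have : c.idx t + 1 ≤ c.idx t := le_csSup (c.idx_set_bdd t) hc
    omega

lemma idx_unique {t : ℝ} {k : ℕ} (h1 : c.seq k < t) (h2 : t ≤ c.seq (k + 1)) :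
    c.idx t = k := by
  have ht : 0 < t := lt_of_le_of_lt (c.seq_nonneg k) h1
  have hle : c.idx t ≤ k := by
    have hmem := (c.idx_spec ht).1
    by_contra hc
    push_neg at hc
    have : c.seq (k + 1) ≤ c.seq (c.idx t) := c.seq_strictMono.monotone hc
    linarith
  have hge : k ≤ c.idx t := le_csSup (c.idx_set_bdd t) h1
  omega

/-- the piece `(seq k, seq (k+1))` is of "reflect at lower boundary" type -/
def Rt (k : ℕ) : Prop := ∀ u, c.seq k < u → u < c.seq (k + 1) → c.φ u < c.r u

lemma lt_of_not_rt {k : ℕ} (h : ¬ c.Rt k) :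
    ∀ u, c.seq k < u → u < c.seq (k + 1) → c.l u < c.φ u := by
  rcases c.good_seq k with hg | hg
  · exact absurd hg h
  · exact hg

lemma mono_piece {k : ℕ} (h : c.Rt k) :
    MonotoneOn c.η (Set.Ico (c.seq k) (c.seq (k + 1))) := by
  intro x hx y hy hxy
  exact c.mono2 x y ((c.seq_nonneg k).trans hx.1) hxy
    (fun u hu1 hu2 => h u (lt_of_le_of_lt hx.1 hu1) (lt_of_le_of_lt hu2 hy.2))

lemma anti_piece {k : ℕ} (h : ¬ c.Rt k) :
    AntitoneOn c.η (Set.Ico (c.seq k) (c.seq (k + 1))) := by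
  intro x hx y hy hxy
  exact c.mono3 x y ((c.seq_nonneg k).trans hx.1) hxy
    (fun u hu1 hu2 => c.lt_of_not_rt h u (lt_of_le_of_lt hx.1 hu1) (lt_of_le_of_lt hu2 hy.2))

/-- left limit of `η` at the right endpoint of piece `k` -/
noncomputable def ll (k : ℕ) : ℝ := leftLim c.η (c.seq (k + 1))

lemma eta_tendsto (t : ℝ) (ht : 0 < t) : Tendsto c.η (𝓝[<] t) (𝓝 (leftLim c.η t)) :=
  tendsto_leftLim' c.cη t ht

lemma eta_le_ll {k : ℕ} (h : c.Rt k) {t : ℝ} (htm : t ∈ Set.Ico (c.seq k) (c.seq (k + 1))) :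
    c.η t ≤ c.ll k := by
  refine ge_of_tendsto (c.eta_tendsto _ (c.seq_succ_pos k)) ?_
  filter_upwards [Ioo_mem_nhdsLT_of_mem (⟨htm.2, le_rfl⟩ : c.seq (k+1) ∈ Set.Ioc t _)]
    with u hu
  exact c.mono_piece h htm ⟨htm.1.trans hu.1.le, hu.2⟩ (le_of_lt hu.1)

lemma ll_le_eta {k : ℕ} (h : ¬ c.Rt k) {t : ℝ} (htm : t ∈ Set.Ico (c.seq k) (c.seq (k + 1))) :
    c.ll k ≤ c.η t := by
  refine le_of_tendsto (c.eta_tendsto _ (c.seq_succ_pos k)) ?_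
  filter_upwards [Ioo_mem_nhdsLT_of_mem (⟨htm.2, le_rfl⟩ : c.seq (k+1) ∈ Set.Ioc t _)]
    with u hu
  exact c.anti_piece h htm ⟨htm.1.trans hu.1.le, hu.2⟩ (le_of_lt hu.1)

end SkoCtx
namespace SkoCtx
variable (c : SkoCtx)

/-- cumulative lower-boundary pushing at partition points -/
noncomputable def Hh (c : SkoCtx) : ℕ → ℝ
  | 0 => max (c.η 0) 0
  | k + 1 => Hh c k + (if c.Rt k then c.ll k - c.η (c.seq k) else 0) +
      max (c.η (c.seq (k + 1)) - c.ll k) 0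

lemma Hh_succ (k : ℕ) : c.Hh (k + 1) = c.Hh k +
    (if c.Rt k then c.ll k - c.η (c.seq k) else 0) +
    max (c.η (c.seq (k + 1)) - c.ll k) 0 := by rw [Hh]

noncomputable def pieceVal (m : ℕ) (t : ℝ) : ℝ :=
  c.Hh m + (if c.Rt m then c.η t - c.η (c.seq m) else 0)

noncomputable def etaL (t : ℝ) : ℝ :=
  if 0 < t then
    (if t = c.seq (c.idx t + 1) then c.Hh (c.idx t + 1) else c.pieceVal (c.idx t) t)
  else c.Hh 0

lemma etaL_nonpos {t : ℝ} (ht : t ≤ 0) : c.etaL t = c.Hh 0 := by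
  rw [etaL, if_neg (not_lt.2 ht)]

lemma etaL_seq (m : ℕ) : c.etaL (c.seq m) = c.Hh m := by
  cases m with
  | zero => rw [c.seq_zero]; exact c.etaL_nonpos le_rfl
  | succ k =>
    have ht : 0 < c.seq (k + 1) := c.seq_succ_pos k
    have hidx : c.idx (c.seq (k + 1)) = k := c.idx_unique (c.seq_lt_succ k) le_rfl
    rw [etaL, if_pos ht, hidx, if_pos rfl]

lemma etaL_mid {m : ℕ} {t : ℝ} (h1 : c.seq m < t) (h2 : t < c.seq (m + 1)) :
    c.etaL t = c.pieceVal m t := by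
  have ht : 0 < t := lt_of_le_of_lt (c.seq_nonneg m) h1
  have hidx : c.idx t = m := c.idx_unique h1 h2.le
  rw [etaL, if_pos ht, hidx, if_neg h2.ne]

lemma etaL_Ico {m : ℕ} {t : ℝ} (h : t ∈ Set.Ico (c.seq m) (c.seq (m + 1))) :
    c.etaL t = c.pieceVal m t := by
  rcases eq_or_lt_of_le h.1 with heq | hlt
  · rw [← heq, c.etaL_seq, pieceVal]
    simp
  · exact c.etaL_mid hlt h.2

lemma exists_piece {t : ℝ} (ht : 0 ≤ t) :
    ∃ m, t ∈ Set.Ico (c.seq m) (c.seq (m + 1)) := by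
  rcases eq_or_lt_of_le ht with heq | hpos
  · exact ⟨0, by rw [c.seq_zero, ← heq], by rw [← heq]; exact c.seq_succ_pos 0⟩
  · by_cases hend : t = c.seq (c.idx t + 1)
    · exact ⟨c.idx t + 1, hend.ge, lt_of_le_of_lt hend.le (c.seq_lt_succ _)⟩
    · obtain ⟨h1, h2⟩ := c.idx_spec hpos
      exact ⟨c.idx t, ⟨h1.le, lt_of_le_of_ne h2 hend⟩⟩

lemma eta_ge_base {k : ℕ} (h : c.Rt k) {t : ℝ}
    (htm : t ∈ Set.Ico (c.seq k) (c.seq (k + 1))) : c.η (c.seq k) ≤ c.η t :=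
  c.mono_piece h (Set.left_mem_Ico.2 (c.seq_lt_succ k)) htm htm.1

lemma eta_le_base {k : ℕ} (h : ¬ c.Rt k) {t : ℝ}
    (htm : t ∈ Set.Ico (c.seq k) (c.seq (k + 1))) : c.η t ≤ c.η (c.seq k) :=
  c.anti_piece h (Set.left_mem_Ico.2 (c.seq_lt_succ k)) htm htm.1

/-- The fundamental piece inequality. -/
lemma piece_ineq {m : ℕ} {x y : ℝ} (hx : x ∈ Set.Icc (c.seq m) (c.seq (m + 1)))
    (hy : y ∈ Set.Icc (c.seq m) (c.seq (m + 1))) (hxy : x ≤ y) :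
    max (c.η y - c.η x) 0 ≤ c.etaL y - c.etaL x := by
  rcases eq_or_lt_of_le hxy with rfl | hlt
  · simp
  have hxIco : x ∈ Set.Ico (c.seq m) (c.seq (m + 1)) := ⟨hx.1, lt_of_lt_of_le hlt hy.2⟩
  rcases eq_or_lt_of_le hy.2 with hyend | hyIco
  · -- y = seq (m+1)
    subst hyend
    rw [c.etaL_Ico hxIco, c.etaL_seq (m + 1), c.Hh_succ, pieceVal]
    by_cases hR : c.Rt m
    · have h1 : c.η x ≤ c.ll m := c.eta_le_ll hR hxIco
      simp only [if_pos hR]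
      rcases le_or_gt (c.η (c.seq (m + 1)) - c.ll m) 0 with hc | hc
      · rw [max_eq_right hc]
        refine max_le (by linarith) (by linarith)
      · rw [max_eq_left hc.le]
        refine max_le (by linarith) (by linarith)
    · have h1 : c.ll m ≤ c.η x := c.ll_le_eta hR hxIco
      simp only [if_neg hR]
      refine max_le ?_ ?_
      · have : c.η (c.seq (m+1)) - c.η x ≤ c.η (c.seq (m+1)) - c.ll m := by linarith
        calc c.η (c.seq (m+1)) - c.η x ≤ max (c.η (c.seq (m+1)) - c.ll m) 0 :=
              this.trans (le_max_left _ _)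
          _ ≤ _ := by linarith [le_max_right (c.η (c.seq (m+1)) - c.ll m) (0:ℝ)]
      · linarith [le_max_right (c.η (c.seq (m+1)) - c.ll m) (0:ℝ)]
  · -- y interior
    have hyIco' : y ∈ Set.Ico (c.seq m) (c.seq (m + 1)) := ⟨hy.1, hyIco⟩
    rw [c.etaL_Ico hxIco, c.etaL_Ico hyIco', pieceVal, pieceVal]
    by_cases hR : c.Rt m
    · rw [if_pos hR, if_pos hR]
      have := c.mono_piece hR hxIco hyIco' hxy
      refine max_le (by linarith) (by linarith)
    · rw [if_neg hR, if_neg hR]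
      have := c.anti_piece hR hxIco hyIco' hxy
      refine max_le (by linarith) (by linarith)

/-- chained version of the piece inequality -/
lemma key_ineq_aux : ∀ n : ℕ, ∀ x y : ℝ, 0 ≤ x → x ≤ y → y ≤ c.seq n →
    max (c.η y - c.η x) 0 ≤ c.etaL y - c.etaL x := by
  intro n
  induction n with
  | zero =>
    intro x y hx hxy hy
    rw [c.seq_zero] at hy
    have : x = y := le_antisymm hxy (hy.trans hx)
    subst this
    simp
  | succ n ih =>
    intro x y hx hxy hy
    by_cases hyn : y ≤ c.seq n
    · exact ih x y hx hxy hyn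
    push_neg at hyn
    by_cases hxn : c.seq n ≤ x
    · exact c.piece_ineq ⟨hxn, hxy.trans hy⟩ ⟨hyn.le, hy⟩ hxy
    push_neg at hxn
    have h1 := ih x (c.seq n) hx hxn.le le_rfl
    have h2 := c.piece_ineq (Set.left_mem_Icc.2 (c.seq_lt_succ n).le) ⟨hyn.le, hy⟩ hyn.le
    have : max (c.η y - c.η x) 0 ≤
        max (c.η y - c.η (c.seq n)) 0 + max (c.η (c.seq n) - c.η x) 0 := by
      refine max_le ?_ (by positivity)
      have a1 := le_max_left (c.η y - c.η (c.seq n)) (0:ℝ)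
      have a2 := le_max_left (c.η (c.seq n) - c.η x) (0:ℝ)
      linarith
    linarith

lemma key_ineq {x y : ℝ} (hx : 0 ≤ x) (hxy : x ≤ y) :
    max (c.η y - c.η x) 0 ≤ c.etaL y - c.etaL x := by
  obtain ⟨n, hn⟩ := (c.seq_tendsto.eventually_ge_atTop y).exists
  exact c.key_ineq_aux n x y hx hxy hn

lemma etaL_monotone : Monotone c.etaL := by
  intro x y hxy
  rcases le_or_gt y 0 with hy | hy
  · rw [c.etaL_nonpos hy, c.etaL_nonpos (hxy.trans hy)]
  rcases le_or_gt x 0 with hx | hx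
  · rw [c.etaL_nonpos hx]
    have h0 : c.etaL 0 = c.Hh 0 := c.etaL_nonpos le_rfl
    have := c.key_ineq le_rfl hy.le
    rw [h0] at this
    have h2 := le_max_right (c.η y - c.η 0) (0:ℝ)
    linarith
  · have := c.key_ineq hx.le hxy
    have h2 := le_max_right (c.η y - c.η x) (0:ℝ)
    linarith

/-- the candidate for the upper-boundary constraining process -/
noncomputable def etaR (t : ℝ) : ℝ := c.etaL t - c.η (max t 0)

lemma etaR_monotone : Monotone c.etaR := by
  intro x y hxy
  rcases le_or_gt y 0 with hy | hy
  · unfold etaR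
    rw [c.etaL_nonpos hy, c.etaL_nonpos (hxy.trans hy), max_eq_right hy,
      max_eq_right (hxy.trans hy)]
  rcases le_or_gt x 0 with hx | hx
  · have h1 : c.etaR x = c.etaR 0 := by
      unfold etaR
      rw [c.etaL_nonpos hx, c.etaL_nonpos le_rfl, max_eq_right hx, max_eq_right le_rfl]
    rw [h1]
    unfold etaR
    rw [max_eq_left hy.le, max_eq_right le_rfl]
    have := c.key_ineq le_rfl hy.le
    have h2 := le_max_left (c.η y - c.η 0) (0:ℝ)
    rw [c.etaL_nonpos le_rfl] at this ⊢
    linarith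
  · unfold etaR
    rw [max_eq_left hy.le, max_eq_left hx.le]
    have := c.key_ineq hx.le hxy
    have h2 := le_max_left (c.η y - c.η x) (0:ℝ)
    linarith

lemma eta_eq_sub {t : ℝ} (ht : 0 ≤ t) : c.η t = c.etaL t - c.etaR t := by
  unfold etaR
  rw [max_eq_left ht]
  ring

end SkoCtx
namespace SkoCtx
variable (c : SkoCtx)

lemma etaL_rc (x : ℝ) : ContinuousWithinAt c.etaL (Set.Ici x) x := by
  rcases lt_or_ge x 0 with hx | hx
  · refine ((continuousWithinAt_const : ContinuousWithinAt (fun _ => c.Hh 0) (Set.Ici x) x)).congr_of_eventuallyEq ?_ ?_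
    · filter_upwards [mem_nhdsWithin_of_mem_nhds (Iio_mem_nhds hx)] with u hu
      exact c.etaL_nonpos hu.le
    · exact c.etaL_nonpos hx.le
  · obtain ⟨m, hm⟩ := c.exists_piece hx
    have hcont : ContinuousWithinAt
        (fun t => c.Hh m + (if c.Rt m then c.η t - c.η (c.seq m) else 0))
        (Set.Ici x) x := by
      by_cases hR : c.Rt m
      · simp only [if_pos hR]
        exact continuousWithinAt_const.add (((c.cη x hx).1).sub continuousWithinAt_const)
      · simp only [if_neg hR]
        exact continuousWithinAt_const.add continuousWithinAt_const
    refine hcont.congr_of_eventuallyEq ?_ ?_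
    · filter_upwards [mem_nhdsWithin_of_mem_nhds (Iio_mem_nhds hm.2),
        self_mem_nhdsWithin] with u hu1 hu2
      exact c.etaL_Ico ⟨hm.1.trans hu2, hu1⟩
    · exact c.etaL_Ico hm

lemma etaL_tendsto_left_end (m : ℕ) :
    Tendsto c.etaL (𝓝[<] c.seq (m + 1))
      (𝓝 (c.Hh m + (if c.Rt m then c.ll m - c.η (c.seq m) else 0))) := by
  have hmem : Set.Ioo (c.seq m) (c.seq (m + 1)) ∈ 𝓝[<] c.seq (m + 1) :=
    Ioo_mem_nhdsLT_of_mem ⟨c.seq_lt_succ m, le_rfl⟩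
  have hten : Tendsto (fun t => c.Hh m + (if c.Rt m then c.η t - c.η (c.seq m) else 0))
      (𝓝[<] c.seq (m + 1)) (𝓝 (c.Hh m + (if c.Rt m then c.ll m - c.η (c.seq m) else 0))) := by
    by_cases hR : c.Rt m
    · simp only [if_pos hR]
      exact tendsto_const_nhds.add
        (((c.eta_tendsto _ (c.seq_succ_pos m))).sub tendsto_const_nhds)
    · simp only [if_neg hR]
      exact tendsto_const_nhds.add tendsto_const_nhds
  refine hten.congr' ?_
  filter_upwards [hmem] with u hu
  exact (c.etaL_mid hu.1 hu.2).symm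

lemma etaL_tendsto_left_mid {m : ℕ} {t : ℝ} (h1 : c.seq m < t) (h2 : t < c.seq (m + 1)) :
    Tendsto c.etaL (𝓝[<] t)
      (𝓝 (c.Hh m + (if c.Rt m then leftLim c.η t - c.η (c.seq m) else 0))) := by
  have htpos : 0 < t := lt_of_le_of_lt (c.seq_nonneg m) h1
  have hmem : Set.Ioo (c.seq m) t ∈ 𝓝[<] t := Ioo_mem_nhdsLT_of_mem ⟨h1, le_rfl⟩
  have hten : Tendsto (fun u => c.Hh m + (if c.Rt m then c.η u - c.η (c.seq m) else 0))
      (𝓝[<] t) (𝓝 (c.Hh m + (if c.Rt m then leftLim c.η t - c.η (c.seq m) else 0))) := by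
    by_cases hR : c.Rt m
    · simp only [if_pos hR]
      exact tendsto_const_nhds.add ((c.eta_tendsto t htpos).sub tendsto_const_nhds)
    · simp only [if_neg hR]
      exact tendsto_const_nhds.add tendsto_const_nhds
  refine hten.congr' ?_
  filter_upwards [hmem] with u hu
  exact (c.etaL_mid hu.1 (hu.2.trans h2)).symm

lemma nebot (t : ℝ) : (𝓝[<] t) ≠ ⊥ := (inferInstance : (𝓝[<] t).NeBot).ne'

lemma etaL_leftLim_zero : leftLim c.etaL 0 = c.etaL 0 := by
  have : Tendsto c.etaL (𝓝[<] (0:ℝ)) (𝓝 (c.Hh 0)) := by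
    refine tendsto_const_nhds.congr' ?_
    filter_upwards [self_mem_nhdsWithin] with u hu
    exact (c.etaL_nonpos (le_of_lt hu)).symm
  rw [leftLim_eq_of_tendsto this, c.etaL_nonpos le_rfl]

/-- no jump of `etaL` at points where `φ` is away from the lower boundary -/
lemma etaL_leftLim_eq {t : ℝ} (ht : 0 ≤ t) (h : c.l t < c.φ t) :
    leftLim c.etaL t = c.etaL t := by
  rcases eq_or_lt_of_le ht with heq | hpos
  · rw [← heq]; exact c.etaL_leftLim_zero
  have hjump : c.η t ≤ leftLim c.η t := (c.jump4 t hpos).2 h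
  by_cases hend : t = c.seq (c.idx t + 1)
  · set m := c.idx t
    rw [hend, leftLim_eq_of_tendsto (c.etaL_tendsto_left_end m),
      c.etaL_seq (m + 1), c.Hh_succ]
    have : max (c.η (c.seq (m + 1)) - c.ll m) 0 = 0 := by
      rw [max_eq_right]
      rw [hend] at hjump
      unfold ll
      linarith
    rw [this, add_zero]
  · obtain ⟨h1, h2⟩ := c.idx_spec hpos
    have h2' : t < c.seq (c.idx t + 1) := lt_of_le_of_ne h2 hend
    rw [leftLim_eq_of_tendsto (c.etaL_tendsto_left_mid h1 h2'),
      c.etaL_mid h1 h2', pieceVal]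
    by_cases hR : c.Rt (c.idx t)
    · simp only [if_pos hR]
      have hle : leftLim c.η t ≤ c.η t := by
        refine le_of_tendsto (c.eta_tendsto t hpos) ?_
        filter_upwards [Ioo_mem_nhdsLT_of_mem (⟨h1, le_rfl⟩ : t ∈ Set.Ioc (c.seq (c.idx t)) t)]
          with u hu
        exact c.mono_piece hR ⟨hu.1.le, hu.2.trans h2'⟩ ⟨h1.le, h2'⟩ hu.2.le
      have : leftLim c.η t = c.η t := le_antisymm hle hjump
      rw [this]
    · simp only [if_neg hR]

/-- `etaL` is constant on a right neighborhood of points where `φ` is away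
from the lower boundary -/
lemma etaL_const_right {t : ℝ} (ht : 0 ≤ t) (h : c.l t < c.φ t) :
    ∃ δ > 0, ∀ u, t ≤ u → u < t + δ → c.etaL u = c.etaL t := by
  obtain ⟨δ₀, hδ₀, hlφ⟩ := ev_right c.cl c.cφ t ht h
  obtain ⟨m, hm⟩ := c.exists_piece ht
  refine ⟨min δ₀ (c.seq (m + 1) - t),
    lt_min hδ₀ (by have := hm.2; linarith), fun u hu1 hu2 => ?_⟩
  have hu0 : u < c.seq (m + 1) := by
    have := min_le_right δ₀ (c.seq (m + 1) - t); linarith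
  have huIco : u ∈ Set.Ico (c.seq m) (c.seq (m + 1)) := ⟨hm.1.trans hu1, hu0⟩
  rw [c.etaL_Ico huIco, c.etaL_Ico hm, pieceVal, pieceVal]
  by_cases hR : c.Rt m
  · simp only [if_pos hR]
    have h1 : c.η t ≤ c.η u := c.mono_piece hR hm huIco hu1
    have h2 : c.η u ≤ c.η t := by
      refine c.mono3 t u ht hu1 fun v hv1 hv2 => ?_
      refine hlφ v hv1.le ?_
      have := min_le_left δ₀ (c.seq (m + 1) - t); linarith
    rw [le_antisymm h2 h1]
  · simp only [if_neg hR]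

lemma etaR_apply {t : ℝ} (ht : 0 ≤ t) : c.etaR t = c.etaL t - c.η t := by
  rw [etaR, max_eq_left ht]

lemma eta_comp_max_tendsto {t : ℝ} (hpos : 0 < t) :
    Tendsto (fun u => c.η (max u 0)) (𝓝[<] t) (𝓝 (leftLim c.η t)) := by
  refine (c.eta_tendsto t hpos).congr' ?_
  filter_upwards [Ioo_mem_nhdsLT_of_mem (⟨hpos, le_rfl⟩ : t ∈ Set.Ioc 0 t)] with u hu
  rw [max_eq_left hu.1.le]

lemma etaR_leftLim_zero : leftLim c.etaR 0 = c.etaR 0 := by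
  have : Tendsto c.etaR (𝓝[<] (0:ℝ)) (𝓝 (c.Hh 0 - c.η 0)) := by
    refine tendsto_const_nhds.congr' ?_
    filter_upwards [self_mem_nhdsWithin] with u hu
    rw [etaR, c.etaL_nonpos hu.le, max_eq_right hu.le]
  rw [leftLim_eq_of_tendsto this, c.etaR_apply le_rfl, c.etaL_nonpos le_rfl]

/-- no jump of `etaR` at points where `φ` is away from the upper boundary -/
lemma etaR_leftLim_eq {t : ℝ} (ht : 0 ≤ t) (h : c.φ t < c.r t) :
    leftLim c.etaR t = c.etaR t := by
  rcases eq_or_lt_of_le ht with heq | hpos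
  · rw [← heq]; exact c.etaR_leftLim_zero
  have hjump : leftLim c.η t ≤ c.η t := (c.jump4 t hpos).1 h
  by_cases hend : t = c.seq (c.idx t + 1)
  · set m := c.idx t
    have hten : Tendsto c.etaR (𝓝[<] t)
        (𝓝 ((c.Hh m + (if c.Rt m then c.ll m - c.η (c.seq m) else 0)) - c.ll m)) := by
      have h1 := c.etaL_tendsto_left_end m
      rw [← hend] at h1
      have h2 := c.eta_comp_max_tendsto hpos
      have : c.ll m = leftLim c.η t := by rw [ll, ← hend]
      rw [this] at h1 ⊢
      exact h1.sub h2
    rw [leftLim_eq_of_tendsto hten, c.etaR_apply ht, hend,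
      c.etaL_seq (m + 1), c.Hh_succ]
    have : max (c.η (c.seq (m + 1)) - c.ll m) 0 = c.η (c.seq (m + 1)) - c.ll m := by
      rw [max_eq_left]
      rw [hend] at hjump
      unfold ll
      linarith
    rw [this]
    ring
  · obtain ⟨h1, h2⟩ := c.idx_spec hpos
    have h2' : t < c.seq (c.idx t + 1) := lt_of_le_of_ne h2 hend
    have hten : Tendsto c.etaR (𝓝[<] t)
        (𝓝 ((c.Hh (c.idx t) +
          (if c.Rt (c.idx t) then leftLim c.η t - c.η (c.seq (c.idx t)) else 0)) -
            leftLim c.η t)) :=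
      (c.etaL_tendsto_left_mid h1 h2').sub (c.eta_comp_max_tendsto hpos)
    rw [leftLim_eq_of_tendsto hten, c.etaR_apply ht, c.etaL_mid h1 h2', pieceVal]
    by_cases hR : c.Rt (c.idx t)
    · simp only [if_pos hR]; ring
    · simp only [if_neg hR]
      have hge : c.η t ≤ leftLim c.η t := by
        refine ge_of_tendsto (c.eta_tendsto t hpos) ?_
        filter_upwards [Ioo_mem_nhdsLT_of_mem (⟨h1, le_rfl⟩ : t ∈ Set.Ioc (c.seq (c.idx t)) t)]
          with u hu
        exact c.anti_piece hR ⟨hu.1.le, hu.2.trans h2'⟩ ⟨h1.le, h2'⟩ hu.2.le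
      rw [le_antisymm hjump hge]

/-- `etaR` is constant on a right neighborhood of points where `φ` is away
from the upper boundary -/
lemma etaR_const_right {t : ℝ} (ht : 0 ≤ t) (h : c.φ t < c.r t) :
    ∃ δ > 0, ∀ u, t ≤ u → u < t + δ → c.etaR u = c.etaR t := by
  obtain ⟨δ₀, hδ₀, hφr⟩ := ev_right c.cφ c.cr t ht h
  obtain ⟨m, hm⟩ := c.exists_piece ht
  refine ⟨min δ₀ (c.seq (m + 1) - t),
    lt_min hδ₀ (by have := hm.2; linarith), fun u hu1 hu2 => ?_⟩
  have hu0 : u < c.seq (m + 1) := by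
    have := min_le_right δ₀ (c.seq (m + 1) - t); linarith
  have huIco : u ∈ Set.Ico (c.seq m) (c.seq (m + 1)) := ⟨hm.1.trans hu1, hu0⟩
  rw [c.etaR_apply (ht.trans hu1), c.etaR_apply ht, c.etaL_Ico huIco, c.etaL_Ico hm,
    pieceVal, pieceVal]
  by_cases hR : c.Rt m
  · simp only [if_pos hR]; ring
  · simp only [if_neg hR]
    have h1 : c.η u ≤ c.η t := c.anti_piece hR hm huIco hu1
    have h2 : c.η t ≤ c.η u := by
      refine c.mono2 t u ht hu1 fun v hv1 hv2 => ?_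
      refine hφr v hv1.le ?_
      have := min_le_left δ₀ (c.seq (m + 1) - t); linarith
    rw [le_antisymm h1 h2]

lemma etaR_rc (x : ℝ) : ContinuousWithinAt c.etaR (Set.Ici x) x := by
  refine (c.etaL_rc x).sub ?_
  rcases lt_or_ge x 0 with hx | hx
  · refine ((continuousWithinAt_const : ContinuousWithinAt (fun _ => c.η 0) (Set.Ici x) x)).congr_of_eventuallyEq ?_ ?_
    · filter_upwards [mem_nhdsWithin_of_mem_nhds (Iio_mem_nhds hx)] with u hu
      rw [max_eq_right hu.le]
    · rw [max_eq_right hx.le]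
  · refine ((c.cη x hx).1).congr ?_ ?_
    · intro u hu
      rw [max_eq_left (hx.trans hu)]
    · rw [max_eq_left hx]

end SkoCtx
open MeasureTheory in
lemma stieltjes_measure_zero (F : StieltjesFunction ℝ) (A : Set ℝ)
    (hjump : ∀ t ∈ A, leftLim F t = F t)
    (hconst : ∀ t ∈ A, ∃ δ > 0, ∀ u, t ≤ u → u < t + δ → F u = F t) :
    F.measure A = 0 := by
  choose! δ hp hc using hconst
  have hIco : ∀ t ∈ A, F.measure (Set.Ico t (t + δ t)) = 0 := by
    intro t ht
    rw [StieltjesFunction.measure_Ico]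
    have h1 : leftLim F (t + δ t) = F t := by
      refine leftLim_eq_of_tendsto ?_
      refine tendsto_const_nhds.congr' ?_
      filter_upwards [Ioo_mem_nhdsLT_of_mem
        (⟨lt_add_of_pos_right t (hp t ht), le_rfl⟩ : t + δ t ∈ Set.Ioc t (t + δ t))] with u hu
      exact (hc t ht u hu.1.le hu.2).symm
    rw [h1, hjump t ht]
    simp
  set V : A → Set ℝ := fun a => Set.Ioo (a : ℝ) ((a : ℝ) + δ a) with hV
  obtain ⟨T, hTc, hTU⟩ := TopologicalSpace.isOpen_iUnion_countable V (fun i => isOpen_Ioo)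
  set U : Set ℝ := ⋃ i, V i with hU
  have hU0 : F.measure U = 0 := by
    rw [← hTU]
    refine (measure_biUnion_null_iff hTc).2 fun i _ => ?_
    exact measure_mono_null Set.Ioo_subset_Ico_self (hIco i i.2)
  have hWsub : ∀ t ∈ A, ∀ t' ∈ A \ U, t < t' → ¬ t' < t + δ t := by
    intro t ht t' ht' htt' hcon
    exact ht'.2 (Set.mem_iUnion.2 ⟨⟨t, ht⟩, ⟨htt', hcon⟩⟩)
  have hWc : (A \ U).Countable := by
    have hq : ∀ t ∈ A \ U, ∃ q : ℚ, t < (q : ℝ) ∧ (q : ℝ) < t + δ t := fun t htW =>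
      exists_rat_btwn (lt_add_of_pos_right _ (hp t htW.1))
    choose! q hq1 hq2 using hq
    rw [Set.countable_iff_exists_injOn]
    refine ⟨fun t => Encodable.encode (q t), fun t ht t' ht' hqq => ?_⟩
    have hqeq : q t = q t' := Encodable.encode_injective hqq
    by_contra hne
    rcases lt_or_gt_of_ne hne with hlt | hlt
    · exact hWsub t ht.1 t' ht' hlt (by
        have := hq1 t' ht'; have := hq2 t ht; rw [hqeq] at this; linarith)
    · exact hWsub t' ht'.1 t ht hlt (by
        have := hq1 t ht; have := hq2 t' ht'; rw [← hqeq] at this; linarith)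
  have hW0 : F.measure (A \ U) = 0 := by
    rw [← Set.biUnion_of_singleton (A \ U)]
    refine (measure_biUnion_null_iff hWc).2 fun t ht => ?_
    have hsub : {t} ⊆ Set.Ico t (t + δ t) :=
      Set.singleton_subset_iff.2 ⟨le_rfl, lt_add_of_pos_right _ (hp t ht.1)⟩
    exact measure_mono_null hsub (hIco t ht.1)
  refine measure_mono_null (fun t ht => ?_) (measure_union_null hU0 hW0)
  by_cases htU : t ∈ U
  · exact Or.inl htU
  · exact Or.inr ⟨ht, htU⟩

lemma bv_sub {f g : ℝ → ℝ} {s : Set ℝ} (hf : BoundedVariationOn f s)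
    (hg : BoundedVariationOn g s) : BoundedVariationOn (fun x => f x - g x) s := by
  have key : ∀ a b c d : ℝ, edist (a - b) (c - d) ≤ edist a c + edist b d := by
    intro a b c d
    rw [edist_dist, edist_dist, edist_dist, ← ENNReal.ofReal_add dist_nonneg dist_nonneg]
    refine ENNReal.ofReal_le_ofReal ?_
    rw [Real.dist_eq, Real.dist_eq, Real.dist_eq,
      show a - b - (c - d) = (a - c) - (b - d) by ring]
    exact abs_sub _ _
  have hle : eVariationOn (fun x => f x - g x) s ≤ eVariationOn f s + eVariationOn g s := by
    apply iSup_le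
    rintro ⟨n, u, hu, us⟩
    calc ∑ i ∈ Finset.range n, edist (f (u (i+1)) - g (u (i+1))) (f (u i) - g (u i))
        ≤ ∑ i ∈ Finset.range n,
            (edist (f (u (i+1))) (f (u i)) + edist (g (u (i+1))) (g (u i))) :=
          Finset.sum_le_sum fun i _ => key _ _ _ _
      _ = (∑ i ∈ Finset.range n, edist (f (u (i+1))) (f (u i))) +
            ∑ i ∈ Finset.range n, edist (g (u (i+1))) (g (u i)) := Finset.sum_add_distrib
      _ ≤ _ := add_le_add (eVariationOn.sum_le (f := f) (n := n) hu us) (eVariationOn.sum_le (f := g) (n := n) hu us)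
  exact ne_top_of_le_ne_top (ENNReal.add_ne_top.2 ⟨hf, hg⟩) hle

lemma mono_bv {f : ℝ → ℝ} (hf : Monotone f) {a b : ℝ} (hab : a ≤ b) :
    BoundedVariationOn f (Set.Icc a b) := by
  have := (hf.monotoneOn (Set.Icc a b)).locallyBoundedVariationOn a b
    (Set.left_mem_Icc.2 hab) (Set.right_mem_Icc.2 hab)
  rwa [Set.inter_self] at this
/-- If `inf_{t ≥ 0} (r(t) - ℓ(t)) > 0` and `(φ, η)` solves the extended Skorokhod
problem on `[ℓ(·), r(·)]` for `ψ`, then `η` has finite variation on every bounded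
time interval and hence `(φ, η)` solves the Skorokhod problem on `[ℓ(·), r(·)]`
for `ψ`. -/
theorem esp_separated_solves_sp (l r ψ φ η : ℝ → ℝ)
    (hl : Cadlag l) (hr : Cadlag r) (hlr : ∀ t : ℝ, 0 ≤ t → l t ≤ r t)
    (hsep : ∃ ε : ℝ, 0 < ε ∧ ∀ t : ℝ, 0 ≤ t → ε ≤ r t - l t)
    (hψ : Cadlag ψ) (hφ : Cadlag φ) (hη : Cadlag η)
    (h : ESP l r ψ φ η) :
    (∀ T : ℝ, 0 < T → BoundedVariationOn η (Set.Icc 0 T)) ∧ SP l r ψ φ η := by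
  obtain ⟨ε, hε, hsep'⟩ := hsep
  let c : SkoCtx := SkoCtx.mk l r φ η ε hε hsep' hl hr hφ hη
    (fun t ht => ⟨(h.1 t ht).2.1, (h.1 t ht).2.2⟩) h.2.1 h.2.2.1 h.2.2.2.1
  constructor
  · intro T hT
    have heq : Set.EqOn η (fun t => c.etaL t - c.etaR t) (Set.Icc 0 T) :=
      fun t ht => c.eta_eq_sub ht.1
    have hbv : BoundedVariationOn (fun t => c.etaL t - c.etaR t) (Set.Icc 0 T) :=
      bv_sub (mono_bv c.etaL_monotone hT.le) (mono_bv c.etaR_monotone hT.le)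
    unfold BoundedVariationOn
    rw [eVariationOn.eq_of_eqOn heq]
    exact hbv
  · refine ⟨⟨c.etaL, c.etaL_monotone, c.etaL_rc⟩, ⟨c.etaR, c.etaR_monotone, c.etaR_rc⟩,
      h.1, fun t ht => c.eta_eq_sub ht, ?_, ?_⟩
    · exact stieltjes_measure_zero _ _ (fun t ht => c.etaL_leftLim_eq ht.1 ht.2)
        (fun t ht => c.etaL_const_right ht.1 ht.2)
    · exact stieltjes_measure_zero _ _ (fun t ht => c.etaR_leftLim_eq ht.1 ht.2)
        (fun t ht => c.etaR_const_right ht.1 ht.2)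
end

section
/- Closure property of the ESP: if ψ_n → ψ, ℓ_n → ℓ, r_n → r and φ_n → φ uniformly on compact subsets of [0,∞), and for each n the pair (φ_n, φ_n − ψ_n) solves the extended Skorokhod problem on [ℓ_n(·), r_n(·)] for ψ_n, then (φ, φ − ψ) solves the extended Skorokhod problem on [ℓ(·), r(·)] for ψ. -/
open Set Filter

open Function in

private lemma ptwise {fn : ℕ → ℝ → ℝ} {f : ℝ → ℝ}
    (h : ∀ T : ℝ, 0 < T → TendstoUniformlyOn fn f atTop (Set.Icc 0 T))
    {t : ℝ} (ht : 0 ≤ t) : Tendsto (fun n => fn n t) atTop (nhds (f t)) :=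
  (h (t + 1) (by linarith)).tendsto_at ⟨ht, by linarith⟩

private lemma esp_key (gn ηn : ℕ → ℝ → ℝ) (g η : ℝ → ℝ)
    (hg : ∀ u : ℝ, 0 ≤ u → ContinuousWithinAt g (Ici u) u)
    (hηc : ∀ u : ℝ, 0 ≤ u → ContinuousWithinAt η (Ici u) u)
    (hηl : ∀ u : ℝ, 0 < u → ∃ L, Tendsto η (nhdsWithin u (Iio u)) (nhds L))
    (hηnl : ∀ n, ∀ u : ℝ, 0 < u → ∃ L, Tendsto (ηn n) (nhdsWithin u (Iio u)) (nhds L))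
    (hug : ∀ T : ℝ, 0 < T → TendstoUniformlyOn gn g atTop (Icc 0 T))
    (huη : ∀ T : ℝ, 0 < T → TendstoUniformlyOn ηn η atTop (Icc 0 T))
    (hmono : ∀ n, ∀ s t : ℝ, 0 ≤ s → s ≤ t → (∀ u, s < u → u ≤ t → 0 < gn n u) →
      ηn n s ≤ ηn n t)
    (hjump : ∀ n, ∀ t : ℝ, 0 < t → 0 < gn n t → Function.leftLim (ηn n) t ≤ ηn n t)
    (hzero : ∀ n, 0 < gn n 0 → 0 ≤ ηn n 0) :
    (∀ s t : ℝ, 0 ≤ s → s ≤ t → (∀ u, s < u → u ≤ t → 0 < g u) → η s ≤ η t) ∧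
    (∀ t : ℝ, 0 < t → 0 < g t → Function.leftLim η t ≤ η t) ∧
    (0 < g 0 → 0 ≤ η 0) := by
  -- jump condition in the limit
  have hjumplim : ∀ t : ℝ, 0 < t → 0 < g t → Function.leftLim η t ≤ η t := by
    intro t ht hgt
    obtain ⟨L, hL⟩ := hηl t ht
    rw [leftLim_eq_of_tendsto hL]
    refine le_of_forall_pos_le_add (fun ε hε => ?_)
    have h1 : ∀ᶠ n in atTop, 0 < gn n t :=
      (ptwise hug ht.le).eventually (eventually_gt_nhds hgt)
    have h2 : ∀ᶠ n in atTop, ∀ x ∈ Icc (0:ℝ) t, dist (η x) (ηn n x) < ε / 2 :=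
      Metric.tendstoUniformlyOn_iff.mp (huη t ht) (ε / 2) (by positivity)
    obtain ⟨n, hn1, hn2⟩ := (h1.and h2).exists
    obtain ⟨Ln, hLn⟩ := hηnl n t ht
    have hLL : |L - Ln| ≤ ε / 2 := by
      have htd : Tendsto (fun u => |η u - ηn n u|) (nhdsWithin t (Iio t)) (nhds |L - Ln|) :=
        (hL.sub hLn).abs
      refine le_of_tendsto htd ?_
      have hIoo : Ioo (0:ℝ) t ∈ nhdsWithin t (Iio t) := by
        refine mem_nhdsWithin.mpr ⟨Ioi 0, isOpen_Ioi, ht, ?_⟩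
        rintro x ⟨hx1, hx2⟩; exact ⟨hx1, hx2⟩
      filter_upwards [hIoo] with x hx
      have := hn2 x ⟨hx.1.le, hx.2.le⟩
      rw [Real.dist_eq] at this
      exact this.le
    have hjn : Function.leftLim (ηn n) t ≤ ηn n t := hjump n t ht hn1
    rw [leftLim_eq_of_tendsto hLn] at hjn
    have hηt : dist (η t) (ηn n t) < ε / 2 := hn2 t ⟨ht.le, le_refl t⟩
    rw [Real.dist_eq] at hηt
    have h3 := abs_lt.mp hηt
    have h4 := abs_le.mp hLL
    linarith [h3.1, h3.2, h4.1, h4.2]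
  refine ⟨?_, hjumplim, ?_⟩
  · -- monotonicity in the limit
    intro s t hs hst H
    rcases eq_or_lt_of_le hst with rfl | hlt
    · exact le_refl _
    -- local right step
    have stepA : ∀ u : ℝ, s < u → u < t → ∃ v, u < v ∧ v ≤ t ∧ η u ≤ η v := by
      intro u hsu hut
      have hu0 : 0 ≤ u := le_trans hs hsu.le
      have hgu : 0 < g u := H u hsu hut.le
      have hev : ∀ᶠ v in nhdsWithin u (Ici u), g u / 2 < g v :=
        (hg u hu0).eventually (eventually_gt_nhds (by linarith))
      obtain ⟨b, hb, hIco⟩ := mem_nhdsGE_iff_exists_Ico_subset.mp hev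
      set v := min ((u + b) / 2) t with hv
      have huv : u < v := lt_min (by simp only [mem_Ioi] at hb; linarith) hut
      have hvt : v ≤ t := min_le_right _ _
      have ht0 : (0:ℝ) < t := lt_of_le_of_lt hu0 hut
      refine ⟨v, huv, hvt, ?_⟩
      have hbar : ∀ w, u ≤ w → w ≤ v → g u / 2 < g w := by
        intro w hw1 hw2
        refine hIco ⟨hw1, ?_⟩
        have : w ≤ (u + b) / 2 := le_trans hw2 (min_le_left _ _)
        simp only [mem_Ioi] at hb
        linarith
      have h1 : ∀ᶠ n in atTop, ∀ x ∈ Icc (0:ℝ) t, dist (g x) (gn n x) < g u / 2 :=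
        Metric.tendstoUniformlyOn_iff.mp (hug t ht0) (g u / 2) (by positivity)
      have hev2 : ∀ᶠ n in atTop, ηn n u ≤ ηn n v := by
        filter_upwards [h1] with n hn
        refine hmono n u v hu0 huv.le (fun w hw1 hw2 => ?_)
        have hwt : w ≤ t := le_trans hw2 hvt
        have hw0 : 0 ≤ w := le_trans hu0 hw1.le
        have hd := hn w ⟨hw0, hwt⟩
        rw [Real.dist_eq] at hd
        have := abs_lt.mp hd
        have hgw := hbar w hw1.le hw2
        linarith [this.1, this.2]
      exact le_of_tendsto_of_tendsto (ptwise huη hu0) (ptwise huη (le_trans hu0 huv.le)) hev2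
    -- for every s' in (s, t], η s' ≤ η t
    have step2 : ∀ s' : ℝ, s < s' → s' ≤ t → η s' ≤ η t := by
      intro s' hss' hs't
      set S := {u : ℝ | u ∈ Icc s' t ∧ η s' ≤ η u} with hS
      have hs'S : s' ∈ S := ⟨⟨le_refl s', hs't⟩, le_refl _⟩
      have hSne : S.Nonempty := ⟨s', hs'S⟩
      have hSbdd : BddAbove S := ⟨t, fun x hx => hx.1.2⟩
      set u₀ := sSup S with hu₀
      have hle1 : s' ≤ u₀ := le_csSup hSbdd hs'S
      have hle2 : u₀ ≤ t := csSup_le hSne (fun x hx => hx.1.2)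
      have hu₀pos : 0 < u₀ := lt_of_le_of_lt hs (lt_of_lt_of_le hss' hle1)
      have hmem : u₀ ∈ S := by
        refine ⟨⟨hle1, hle2⟩, ?_⟩
        by_contra hcon
        push_neg at hcon
        have hne : u₀ ∉ S := fun h => hcon.not_ge h.2
        have hs'lt : s' < u₀ := lt_of_le_of_ne hle1 (fun h => hne (h ▸ hs'S))
        obtain ⟨L, hL⟩ := hηl u₀ hu₀pos
        have hLge : η s' ≤ L := by
          by_contra hL'
          push_neg at hL'
          have hev : ∀ᶠ w in nhdsWithin u₀ (Iio u₀), η w < η s' :=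
            hL.eventually (eventually_lt_nhds hL')
          obtain ⟨a, ha, hIoo⟩ := (mem_nhdsLT_iff_exists_Ioo_subset' hs'lt).mp hev
          have hmax : max a s' < u₀ := max_lt ha hs'lt
          obtain ⟨w, hwS, hwa⟩ := exists_lt_of_lt_csSup hSne hmax
          have hwu : w < u₀ := lt_of_le_of_ne (le_csSup hSbdd hwS) (fun h => hne (h ▸ hwS))
          have : η w < η s' := hIoo ⟨lt_of_le_of_lt (le_max_left a s') hwa, hwu⟩
          exact absurd hwS.2 (not_le.mpr this)
        have hjmp := hjumplim u₀ hu₀pos (H u₀ (lt_of_lt_of_le hss' hle1) hle2)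
        rw [leftLim_eq_of_tendsto hL] at hjmp
        exact hcon.not_ge (le_trans hLge hjmp)
      rcases eq_or_lt_of_le hle2 with heq | hlt2
      · exact heq ▸ hmem.2
      · obtain ⟨v, hv1, hv2, hv3⟩ := stepA u₀ (lt_of_lt_of_le hss' hle1) hlt2
        have : v ∈ S := ⟨⟨le_trans hle1 hv1.le, hv2⟩, le_trans hmem.2 hv3⟩
        exact absurd (le_csSup hSbdd this) (not_le.mpr hv1)
    -- take s' → s⁺
    have hts : Tendsto η (nhdsWithin s (Ioi s)) (nhds (η s)) :=
      (hηc s hs).mono_left (nhdsWithin_mono s Ioi_subset_Ici_self)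
    refine le_of_tendsto hts ?_
    filter_upwards [Ioc_mem_nhdsGT_of_mem (⟨le_refl s, hlt⟩ : s ∈ Ico s t)] with s' hs'
    exact step2 s' hs'.1 hs'.2
  · -- value at zero
    intro hg0
    have h1 : ∀ᶠ n in atTop, 0 < gn n 0 :=
      (ptwise hug (le_refl 0)).eventually (eventually_gt_nhds hg0)
    refine ge_of_tendsto (ptwise huη (le_refl 0)) ?_
    filter_upwards [h1] with n hn
    exact hzero n hn

open Function in
private lemma leftLim_sub {f g : ℝ → ℝ} {t Lf Lg : ℝ}
    (hf : Filter.Tendsto f (nhdsWithin t (Set.Iio t)) (nhds Lf))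
    (hg : Filter.Tendsto g (nhdsWithin t (Set.Iio t)) (nhds Lg)) :
    Function.leftLim (fun u => f u - g u) t = Lf - Lg :=
  leftLim_eq_of_tendsto (hf.sub hg)

private lemma esp_closure'
    (ln rn ψn φn : ℕ → ℝ → ℝ) (l r ψ φ : ℝ → ℝ)
    (hln : ∀ n, Cadlag (ln n)) (hrn : ∀ n, Cadlag (rn n))
    (hlrn : ∀ n, ∀ t : ℝ, 0 ≤ t → ln n t ≤ rn n t)
    (hψn : ∀ n, Cadlag (ψn n)) (hφn : ∀ n, Cadlag (φn n))
    (hl : Cadlag l) (hr : Cadlag r) (hlr : ∀ t : ℝ, 0 ≤ t → l t ≤ r t)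
    (hψ : Cadlag ψ) (hφ : Cadlag φ)
    (hconvl : ∀ T : ℝ, 0 < T → TendstoUniformlyOn ln l Filter.atTop (Set.Icc 0 T))
    (hconvr : ∀ T : ℝ, 0 < T → TendstoUniformlyOn rn r Filter.atTop (Set.Icc 0 T))
    (hconvψ : ∀ T : ℝ, 0 < T → TendstoUniformlyOn ψn ψ Filter.atTop (Set.Icc 0 T))
    (hconvφ : ∀ T : ℝ, 0 < T → TendstoUniformlyOn φn φ Filter.atTop (Set.Icc 0 T))
    (hesp : ∀ n, ESP (ln n) (rn n) (ψn n) (φn n) (fun t => φn n t - ψn n t)) :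
    ESP l r ψ φ (fun t => φ t - ψ t) := by
  -- first application: the right barrier r - φ with η = φ - ψ
  have K1 := esp_key (fun n u => rn n u - φn n u) (fun n u => φn n u - ψn n u)
    (fun u => r u - φ u) (fun u => φ u - ψ u)
    (fun u hu => ((hr u hu).1).sub ((hφ u hu).1))
    (fun u hu => ((hφ u hu).1).sub ((hψ u hu).1))
    (fun u hu => by
      obtain ⟨Lφ, hLφ⟩ := (hφ u hu.le).2 hu
      obtain ⟨Lψ, hLψ⟩ := (hψ u hu.le).2 hu
      exact ⟨Lφ - Lψ, hLφ.sub hLψ⟩)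
    (fun n u hu => by
      obtain ⟨Lφ, hLφ⟩ := (hφn n u hu.le).2 hu
      obtain ⟨Lψ, hLψ⟩ := (hψn n u hu.le).2 hu
      exact ⟨Lφ - Lψ, hLφ.sub hLψ⟩)
    (fun T hT => (hconvr T hT).sub (hconvφ T hT))
    (fun T hT => (hconvφ T hT).sub (hconvψ T hT))
    (fun n s t hs hst h => (hesp n).2.1 s t hs hst (fun u h1 h2 => sub_pos.mp (h u h1 h2)))
    (fun n t ht h => ((hesp n).2.2.2.1 t ht).1 (sub_pos.mp h))
    (fun n h => (hesp n).2.2.2.2.1 (sub_pos.mp h))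
  -- second application: the left barrier φ - l with η' = ψ - φ
  have K2 := esp_key (fun n u => φn n u - ln n u) (fun n u => ψn n u - φn n u)
    (fun u => φ u - l u) (fun u => ψ u - φ u)
    (fun u hu => ((hφ u hu).1).sub ((hl u hu).1))
    (fun u hu => ((hψ u hu).1).sub ((hφ u hu).1))
    (fun u hu => by
      obtain ⟨Lφ, hLφ⟩ := (hφ u hu.le).2 hu
      obtain ⟨Lψ, hLψ⟩ := (hψ u hu.le).2 hu
      exact ⟨Lψ - Lφ, hLψ.sub hLφ⟩)
    (fun n u hu => by
      obtain ⟨Lφ, hLφ⟩ := (hφn n u hu.le).2 hu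
      obtain ⟨Lψ, hLψ⟩ := (hψn n u hu.le).2 hu
      exact ⟨Lψ - Lφ, hLψ.sub hLφ⟩)
    (fun T hT => (hconvφ T hT).sub (hconvl T hT))
    (fun T hT => (hconvψ T hT).sub (hconvφ T hT))
    (fun n s t hs hst h => by
      have := (hesp n).2.2.1 s t hs hst (fun u h1 h2 => sub_pos.mp (h u h1 h2))
      simp only at this ⊢
      linarith)
    (fun n t ht h => by
      obtain ⟨Lφ, hLφ⟩ := (hφn n t ht.le).2 ht
      obtain ⟨Lψ, hLψ⟩ := (hψn n t ht.le).2 ht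
      have h2 := ((hesp n).2.2.2.1 t ht).2 (sub_pos.mp h)
      rw [leftLim_sub hLφ hLψ] at h2
      rw [leftLim_sub hLψ hLφ]
      simp only at h2 ⊢
      linarith)
    (fun n h => by
      have := (hesp n).2.2.2.2.2 (sub_pos.mp h)
      simp only at this ⊢
      linarith)
  refine ⟨?_, ?_, ?_, ?_, ?_, ?_⟩
  · -- pointwise bounds
    intro t ht
    refine ⟨by ring, ?_, ?_⟩
    · exact le_of_tendsto_of_tendsto' (ptwise hconvl ht) (ptwise hconvφ ht)
        (fun n => ((hesp n).1 t ht).2.1)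
    · exact le_of_tendsto_of_tendsto' (ptwise hconvφ ht) (ptwise hconvr ht)
        (fun n => ((hesp n).1 t ht).2.2)
  · intro s t hs hst H
    exact K1.1 s t hs hst (fun u h1 h2 => sub_pos.mpr (H u h1 h2))
  · intro s t hs hst H
    have := K2.1 s t hs hst (fun u h1 h2 => sub_pos.mpr (H u h1 h2))
    simp only at this ⊢
    linarith
  · intro t ht
    constructor
    · intro h
      exact K1.2.1 t ht (sub_pos.mpr h)
    · intro h
      obtain ⟨Lφ, hLφ⟩ := (hφ t ht.le).2 ht
      obtain ⟨Lψ, hLψ⟩ := (hψ t ht.le).2 ht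
      have h2 := K2.2.1 t ht (sub_pos.mpr h)
      rw [leftLim_sub hLψ hLφ] at h2
      rw [leftLim_sub hLφ hLψ]
      simp only at h2 ⊢
      linarith
  · intro h
    exact K1.2.2 (sub_pos.mpr h)
  · intro h
    have := K2.2.2 (sub_pos.mpr h)
    simp only at this ⊢
    linarith

/-- Closure property of the extended Skorokhod problem: if `ψ_n → ψ`, `ℓ_n → ℓ`,
`r_n → r` and `φ_n → φ` uniformly on compact subsets of `[0, ∞)`, and for each `n`
the pair `(φ_n, φ_n - ψ_n)` solves the ESP on `[ℓ_n(·), r_n(·)]` for `ψ_n`, then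
`(φ, φ - ψ)` solves the ESP on `[ℓ(·), r(·)]` for `ψ`. -/
theorem esp_closure
    (ln rn ψn φn : ℕ → ℝ → ℝ) (l r ψ φ : ℝ → ℝ)
    (hln : ∀ n, Cadlag (ln n)) (hrn : ∀ n, Cadlag (rn n))
    (hlrn : ∀ n, ∀ t : ℝ, 0 ≤ t → ln n t ≤ rn n t)
    (hψn : ∀ n, Cadlag (ψn n)) (hφn : ∀ n, Cadlag (φn n))
    (hl : Cadlag l) (hr : Cadlag r) (hlr : ∀ t : ℝ, 0 ≤ t → l t ≤ r t)
    (hψ : Cadlag ψ) (hφ : Cadlag φ)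
    (hconvl : ∀ T : ℝ, 0 < T → TendstoUniformlyOn ln l Filter.atTop (Set.Icc 0 T))
    (hconvr : ∀ T : ℝ, 0 < T → TendstoUniformlyOn rn r Filter.atTop (Set.Icc 0 T))
    (hconvψ : ∀ T : ℝ, 0 < T → TendstoUniformlyOn ψn ψ Filter.atTop (Set.Icc 0 T))
    (hconvφ : ∀ T : ℝ, 0 < T → TendstoUniformlyOn φn φ Filter.atTop (Set.Icc 0 T))
    (hesp : ∀ n, ESP (ln n) (rn n) (ψn n) (φn n) (fun t => φn n t - ψn n t)) :
    ESP l r ψ φ (fun t => φ t - ψ t) := by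
  exact esp_closure' ln rn ψn φn l r ψ φ hln hrn hlrn hψn hφn hl hr hlr hψ hφ hconvl hconvr hconvψ hconvφ hesp
end

section
/- Explicit formula for the extended Skorokhod map: for any càdlàg ℓ ≤ r and càdlàg ψ, the unique solution (φ, η) of the extended Skorokhod problem on [ℓ(·), r(·)] for ψ is given by φ = ψ − Ξ_{ℓ,r}(ψ) where Ξ_{ℓ,r}(ψ)(t) = max( (ψ(0)−r(0))⁺ ∧ inf_{u∈[0,t]}(ψ(u)−ℓ(u)), sup_{s∈[0,t]} [ (ψ(s)−r(s)) ∧ inf_{u∈[s,t]}(ψ(u)−ℓ(u)) ] ). -/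
open Set Filter

/-- The explicit functional
`Ξ_{ℓ,r}(ψ)(t) = max( (ψ(0)-r(0))⁺ ∧ inf_{u∈[0,t]}(ψ(u)-ℓ(u)),
  sup_{s∈[0,t]} [ (ψ(s)-r(s)) ∧ inf_{u∈[s,t]}(ψ(u)-ℓ(u)) ] )`. -/
noncomputable def Xi (l r ψ : ℝ → ℝ) (t : ℝ) : ℝ :=
  max (min (max (ψ 0 - r 0) 0) (sInf ((fun u => ψ u - l u) '' Set.Icc 0 t)))
      (sSup ((fun s => min (ψ s - r s) (sInf ((fun u => ψ u - l u) '' Set.Icc s t)))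
        '' Set.Icc 0 t))

/-- A càdlàg function is bounded on `[0, T]`. -/
lemma cadlag_bdd {f : ℝ → ℝ} (hf : Cadlag f) (T : ℝ) :
    ∃ M : ℝ, ∀ u ∈ Icc (0:ℝ) T, |f u| ≤ M := by
  rcases le_or_gt T 0 with hT | hT
  · rcases le_or_gt 0 T with hT' | hT'
    · have : T = 0 := le_antisymm hT hT'
      subst this
      exact ⟨|f 0|, by intro u hu; have : u = 0 := le_antisymm hu.2 hu.1; simp [this]⟩
    · exact ⟨0, by intro u hu; exact absurd (hu.1.trans hu.2) (not_le.mpr hT')⟩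
  · have hc : IsCompact (Icc (0:ℝ) T) := isCompact_Icc
    have := hc.induction_on (p := fun s => ∃ M : ℝ, ∀ u ∈ s, |f u| ≤ M)
      ⟨0, by simp⟩
      (fun s t hst ⟨M, hM⟩ => ⟨M, fun u hu => hM u (hst hu)⟩)
      (fun s t ⟨M, hM⟩ ⟨N, hN⟩ => ⟨max M N, fun u hu => by
        rcases hu with hu | hu
        · exact (hM u hu).trans (le_max_left _ _)
        · exact (hN u hu).trans (le_max_right _ _)⟩)
      ?_
    · exact this
    · intro x hx
      have hx0 : 0 ≤ x := hx.1
      -- right side bound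
      have hr : ∀ᶠ u in nhdsWithin x (Ici x), |f u| ≤ |f x| + 1 := by
        have := (hf x hx0).1
        have h2 : ∀ᶠ u in nhdsWithin x (Ici x), dist (f u) (f x) < 1 :=
          Metric.tendsto_nhds.mp this 1 one_pos
        filter_upwards [h2] with u hu
        have := abs_sub_abs_le_abs_sub (f u) (f x)
        rw [Real.dist_eq] at hu
        linarith
      -- left side bound
      have hl : ∀ᶠ u in nhdsWithin x (Iio x), ∃ C : ℝ, |f u| ≤ |f x| + 1 ∨ True := by
        filter_upwards with u; exact ⟨0, Or.inr trivial⟩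
      rcases lt_or_ge 0 x with hx0' | hx0'
      · rcases (hf x hx0).2 hx0' with ⟨c, hc⟩
        have hl2 : ∀ᶠ u in nhdsWithin x (Iio x), |f u| ≤ |c| + 1 := by
          have h2 : ∀ᶠ u in nhdsWithin x (Iio x), dist (f u) c < 1 :=
            Metric.tendsto_nhds.mp hc 1 one_pos
          filter_upwards [h2] with u hu
          have := abs_sub_abs_le_abs_sub (f u) c
          rw [Real.dist_eq] at hu
          linarith
        refine ⟨{u | |f u| ≤ max (|f x| + 1) (|c| + 1)}, ?_, ⟨max (|f x| + 1) (|c| + 1), fun u hu => hu⟩⟩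
        have hsub : Icc (0:ℝ) T ⊆ Ici x ∪ Iio x := fun u _ => (le_or_gt x u).imp id id
        have : nhdsWithin x (Icc 0 T) ≤ nhdsWithin x (Ici x ∪ Iio x) :=
          nhdsWithin_mono x hsub
        rw [nhdsWithin_union] at this
        apply this
        rw [mem_sup]
        constructor
        · filter_upwards [hr] with u hu; exact hu.trans (le_max_left _ _)
        · filter_upwards [hl2] with u hu; exact hu.trans (le_max_right _ _)
      · -- x = 0
        have hxeq : x = 0 := le_antisymm hx0' hx0
        refine ⟨{u | |f u| ≤ |f x| + 1}, ?_, ⟨|f x| + 1, fun u hu => hu⟩⟩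
        have hsub : Icc (0:ℝ) T ⊆ Ici x := fun u hu => by
          simp only [mem_Ici, hxeq]; exact hu.1
        exact nhdsWithin_mono x hsub hr

/-- sup of min with a constant. -/
lemma sSup_min_const {f : ℝ → ℝ} {A : Set ℝ} (hA : A.Nonempty) (hb : BddAbove (f '' A)) (c : ℝ) :
    sSup ((fun v => min (f v) c) '' A) = min (sSup (f '' A)) c := by
  have hne : ((fun v => min (f v) c) '' A).Nonempty := hA.image _
  apply le_antisymm
  · apply csSup_le hne
    rintro x ⟨v, hv, rfl⟩
    exact min_le_min (le_csSup hb ⟨v, hv, rfl⟩) le_rfl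
  · by_contra hcon
    push_neg at hcon
    set m := sSup ((fun v => min (f v) c) '' A) with hm
    have hmc : m < c := lt_of_lt_of_le hcon (min_le_right _ _)
    have hmS : m < sSup (f '' A) := lt_of_lt_of_le hcon (min_le_left _ _)
    rcases exists_lt_of_lt_csSup (hA.image f) hmS with ⟨x, ⟨v, hv, rfl⟩, hx⟩
    have : min (f v) c ≤ m := le_csSup (by
      rcases hb with ⟨B, hB⟩
      exact ⟨max B c, by rintro y ⟨u, hu, rfl⟩; exact le_max_of_le_left (le_trans (min_le_left _ _) (hB ⟨u, hu, rfl⟩)) |>.trans (le_refl _)⟩) ⟨v, hv, rfl⟩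
    have : min (f v) c > m := lt_min hx hmc
    linarith [le_csSup (show BddAbove ((fun v => min (f v) c) '' A) from by
      rcases hb with ⟨B, hB⟩
      exact ⟨max B c, by rintro y ⟨u, hu, rfl⟩; exact le_max_of_le_left ((min_le_left _ _).trans (hB ⟨u, hu, rfl⟩))⟩) ⟨v, hv, rfl⟩]
noncomputable def XiI (g : ℝ → ℝ) (s t : ℝ) : ℝ := sInf (g '' Icc s t)
noncomputable def XiF (g h : ℝ → ℝ) (s t : ℝ) : ℝ :=
  sSup ((fun v => min (h v) (XiI g v t)) '' Icc s t)
noncomputable def XiP (g h : ℝ → ℝ) (t : ℝ) : ℝ :=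
  max (min (max (h 0) 0) (XiI g 0 t)) (XiF g h 0 t)

lemma Xi_eq_XiP (l r ψ : ℝ → ℝ) :
    Xi l r ψ = XiP (fun u => ψ u - l u) (fun u => ψ u - r u) := rfl

lemma lattice_aux (A i0 i1 F0 F1 : ℝ) :
    max (min A (min i0 i1)) (max (min F0 i1) F1)
      = max (min (max (min A i0) F0) i1) F1 := by
  rw [← min_assoc, ← max_assoc, ← min_max_distrib_right]

noncomputable def XiIo (g : ℝ → ℝ) (v t : ℝ) : ℝ := sInf (g '' Ico v t)
noncomputable def XiTo (g h : ℝ → ℝ) (t : ℝ) : ℝ :=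
  sSup ((fun v => min (h v) (XiIo g v t)) '' Ico 0 t)
noncomputable def XiL (g h : ℝ → ℝ) (t : ℝ) : ℝ :=
  max (min (max (h 0) 0) (XiIo g 0 t)) (XiTo g h t)

lemma lattice_aux2 (a b c d : ℝ) :
    max (min a c) (max (min b c) d) = max (min (max a b) c) d := by
  rw [← max_assoc, ← min_max_distrib_right]

structure XiHyp (g h : ℝ → ℝ) : Prop where
  bddg : ∀ T : ℝ, ∃ M, ∀ u ∈ Icc (0:ℝ) T, |g u| ≤ M
  bddh : ∀ T : ℝ, ∃ M, ∀ u ∈ Icc (0:ℝ) T, |h u| ≤ M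
  rcg : ∀ t : ℝ, 0 ≤ t → ContinuousWithinAt g (Ici t) t
  rch : ∀ t : ℝ, 0 ≤ t → ContinuousWithinAt h (Ici t) t
  llg : ∀ t : ℝ, 0 < t → ∃ c, Tendsto g (nhdsWithin t (Iio t)) (nhds c)
  llh : ∀ t : ℝ, 0 < t → ∃ c, Tendsto h (nhdsWithin t (Iio t)) (nhds c)
  hlg : ∀ t : ℝ, 0 ≤ t → h t ≤ g t

namespace XiHyp
variable {g h : ℝ → ℝ} (H : XiHyp g h)
include H

lemma bddBelow_g {T : ℝ} {S : Set ℝ} (hS : S ⊆ Icc 0 T) : BddBelow (g '' S) := by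
  rcases H.bddg T with ⟨M, hM⟩
  exact ⟨-M, by rintro x ⟨u, hu, rfl⟩; have := hM u (hS hu); exact neg_le_of_abs_le this⟩

lemma bddAbove_g {T : ℝ} {S : Set ℝ} (hS : S ⊆ Icc 0 T) : BddAbove (g '' S) := by
  rcases H.bddg T with ⟨M, hM⟩
  exact ⟨M, by rintro x ⟨u, hu, rfl⟩; exact le_of_abs_le (hM u (hS hu))⟩

lemma XiI_le {s t u : ℝ} (h0 : 0 ≤ s) (hu : u ∈ Icc s t) : XiI g s t ≤ g u :=
  csInf_le (H.bddBelow_g (fun x hx => ⟨h0.trans hx.1, hx.2⟩)) ⟨u, hu, rfl⟩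

lemma le_XiI {s t c : ℝ} (hst : s ≤ t) (hc : ∀ u ∈ Icc s t, c ≤ g u) : c ≤ XiI g s t :=
  le_csInf ((nonempty_Icc.mpr hst).image g) (by rintro x ⟨u, hu, rfl⟩; exact hc u hu)

lemma bddAbove_minI {s t : ℝ} (h0 : 0 ≤ s) {S : Set ℝ} (hS : S ⊆ Icc s t) :
    BddAbove ((fun v => min (h v) (XiI g v t)) '' S) := by
  rcases H.bddh t with ⟨M, hM⟩
  refine ⟨M, ?_⟩
  rintro x ⟨v, hv, rfl⟩
  have hv' := hS hv
  exact le_trans (min_le_left _ _) (le_of_abs_le (hM v ⟨h0.trans hv'.1, hv'.2⟩))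

lemma XiF_le {s t c : ℝ} (hst : s ≤ t)
    (hc : ∀ v ∈ Icc s t, min (h v) (XiI g v t) ≤ c) : XiF g h s t ≤ c :=
  csSup_le ((nonempty_Icc.mpr hst).image _) (by rintro x ⟨v, hv, rfl⟩; exact hc v hv)

lemma le_XiF {s t v : ℝ} (h0 : 0 ≤ s) (hv : v ∈ Icc s t) :
    min (h v) (XiI g v t) ≤ XiF g h s t :=
  le_csSup (H.bddAbove_minI h0 (fun x hx => hx)) ⟨v, hv, rfl⟩

/-- The pointwise bounds `h t ≤ Ξ t ≤ g t`. -/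
lemma xi_bounds {t : ℝ} (ht : 0 ≤ t) : h t ≤ XiP g h t ∧ XiP g h t ≤ g t := by
  constructor
  · have h1 : min (h t) (XiI g t t) ≤ XiF g h 0 t := H.le_XiF le_rfl ⟨ht, le_rfl⟩
    have h2 : XiI g t t = g t := by
      rw [XiI, Icc_self, image_singleton, csInf_singleton]
    rw [h2, min_eq_left (H.hlg t ht)] at h1
    exact le_trans h1 (le_max_right _ _)
  · apply max_le
    · exact le_trans (min_le_right _ _) (H.XiI_le le_rfl ⟨ht, le_rfl⟩)
    · apply H.XiF_le ht
      intro v hv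
      exact le_trans (min_le_right _ _) (H.XiI_le hv.1 ⟨hv.2, le_rfl⟩)

/-- Splitting of the infimum. -/
lemma XiI_split {v s t : ℝ} (hv : v ≤ s) (hst : s ≤ t) (h0 : 0 ≤ v) :
    XiI g v t = min (XiI g v s) (XiI g s t) := by
  have hsplit : Icc v t = Icc v s ∪ Icc s t := (Icc_union_Icc_eq_Icc hv hst).symm
  have b1 : BddBelow (g '' Icc v s) :=
    H.bddBelow_g (T := t) (fun x hx => ⟨h0.trans hx.1, hx.2.trans hst⟩)
  have b2 : BddBelow (g '' Icc s t) :=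
    H.bddBelow_g (T := t) (fun x hx => ⟨h0.trans (hv.trans hx.1), hx.2⟩)
  rw [XiI, hsplit, image_union, csInf_union b1 ((nonempty_Icc.mpr hv).image g)
    b2 ((nonempty_Icc.mpr hst).image g)]
  rfl

/-- The semigroup property. -/
lemma xi_semigroup {s t : ℝ} (h0 : 0 ≤ s) (hst : s ≤ t) :
    XiP g h t = max (min (XiP g h s) (XiI g s t)) (XiF g h s t) := by
  have hIsplit : XiI g 0 t = min (XiI g 0 s) (XiI g s t) := H.XiI_split h0 hst le_rfl
  have hFsplit : XiF g h 0 t = max (min (XiF g h 0 s) (XiI g s t)) (XiF g h s t) := by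
    have hsplit : Icc (0:ℝ) t = Icc 0 s ∪ Icc s t := (Icc_union_Icc_eq_Icc h0 hst).symm
    have b1 : BddAbove ((fun v => min (h v) (XiI g v t)) '' Icc 0 s) :=
      H.bddAbove_minI (s := 0) le_rfl (fun x hx => ⟨hx.1, hx.2.trans hst⟩)
    have b2 : BddAbove ((fun v => min (h v) (XiI g v t)) '' Icc s t) :=
      H.bddAbove_minI h0 (fun x hx => hx)
    rw [XiF, hsplit, image_union, csSup_union b1 ((nonempty_Icc.mpr h0).image _)
      b2 ((nonempty_Icc.mpr hst).image _)]
    have heq : ∀ v ∈ Icc (0:ℝ) s,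
        min (h v) (XiI g v t) = min (min (h v) (XiI g v s)) (XiI g s t) := by
      intro v hv
      rw [H.XiI_split hv.2 hst hv.1, ← min_assoc]
    have himg : (fun v => min (h v) (XiI g v t)) '' Icc 0 s
        = (fun v => min ((fun w => min (h w) (XiI g w s)) v) (XiI g s t)) '' Icc 0 s := by
      apply image_congr heq
    rw [himg, sSup_min_const (nonempty_Icc.mpr h0)
      (by
        rcases H.bddh s with ⟨M, hM⟩
        refine ⟨M, ?_⟩
        rintro x ⟨u, hu, rfl⟩
        exact le_trans (min_le_left _ _) (le_of_abs_le (hM u hu)))]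
    rfl
  rw [XiP, hIsplit, hFsplit, XiP]
  exact lattice_aux _ _ _ _ _

/-- If the explicit solution stays strictly below the upper barrier on `(s,t]`,
then `Ξ` is nonincreasing on `[s,t]`. -/
lemma xi_decr {s t : ℝ} (h0 : 0 ≤ s) (hst : s ≤ t)
    (hup : ∀ u, s < u → u ≤ t → h u < XiP g h u) : XiP g h t ≤ XiP g h s := by
  set c := XiP g h s with hc
  have key : ∀ ε : ℝ, 0 < ε → XiP g h t ≤ c + ε := by
    intro ε hε
    set G : Set ℝ := {w | w ∈ Icc s t ∧ ∀ v ∈ Icc s w, XiP g h v ≤ c + ε} with hG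
    have hsG : s ∈ G := by
      refine ⟨⟨le_rfl, hst⟩, fun v hv => ?_⟩
      have hveq : v = s := le_antisymm hv.2 hv.1
      rw [hveq]; linarith
    have hGne : G.Nonempty := ⟨s, hsG⟩
    have hGbdd : BddAbove G := ⟨t, fun x hx => hx.1.2⟩
    set w := sSup G with hwdef
    have hws : s ≤ w := le_csSup hGbdd hsG
    have hwt : w ≤ t := csSup_le hGne (fun x hx => hx.1.2)
    have hw0 : 0 ≤ w := h0.trans hws
    have f1 : ∀ v, s ≤ v → v < w → XiP g h v ≤ c + ε := by
      intro v hv hvw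
      rcases exists_lt_of_lt_csSup hGne hvw with ⟨w', hw'G, hvw'⟩
      exact hw'G.2 v ⟨hv, le_of_lt hvw'⟩
    have f2 : XiP g h w ≤ c + ε := by
      by_contra hgt
      push_neg at hgt
      have hsw : s < w := by
        rcases eq_or_lt_of_le hws with heq | hlt
        · exfalso; rw [← heq] at hgt; rw [← hc] at hgt; linarith
        · exact hlt
      have hF : XiF g h s w ≤ max (c + ε) (h w) := by
        apply H.XiF_le hws
        intro v hv
        rcases eq_or_lt_of_le hv.2 with hveq | hvlt
        · rw [hveq]; exact le_trans (min_le_left _ _) (le_max_right _ _)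
        · rcases eq_or_lt_of_le hv.1 with hseq | hslt
          · have hb := (H.xi_bounds h0).1
            refine le_trans (min_le_left _ _) ?_
            rw [← hseq]
            refine le_trans hb (le_trans ?_ (le_max_left _ _))
            rw [← hc]
            linarith
          · have h1 := hup v hslt (le_trans hv.2 hwt)
            have h2 := f1 v (le_of_lt hslt) hvlt
            exact le_trans (min_le_left _ _)
              (le_trans (le_of_lt h1) (le_trans h2 (le_max_left _ _)))
        done
      have hXiw : XiP g h w ≤ max (c + ε) (h w) := by
        rw [H.xi_semigroup h0 hws]
        apply max_le
        · exact le_trans (min_le_left _ _) (by linarith [le_max_left (c + ε) (h w)])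
        · exact hF
      rcases max_cases (c + ε) (h w) with ⟨hm, _⟩ | ⟨hm, _⟩
      · rw [hm] at hXiw; linarith
      · rw [hm] at hXiw
        exact absurd hXiw (not_le.mpr (hup w hsw hwt))
    have f3 : w = t := by
      by_contra hne
      have hwt' : w < t := lt_of_le_of_ne hwt hne
      have hhw : h w < c + ε := by
        rcases eq_or_lt_of_le hws with heq | hsw
        · have hb := (H.xi_bounds h0).1
          rw [← heq]; linarith
        · exact lt_of_lt_of_le (hup w hsw hwt) f2
      have hev : h ⁻¹' (Iio (c + ε)) ∈ nhdsWithin w (Ici w) :=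
        (H.rch w hw0) (Iio_mem_nhds hhw)
      rcases mem_nhdsGE_iff_exists_Ico_subset.mp hev with ⟨u, hu, hsub⟩
      set w' := min t ((w + u) / 2) with hw'
      have huw : w < u := hu
      have hww' : w < w' := by
        apply lt_min hwt'
        linarith
      have hw'u : w' < u := by
        apply lt_of_le_of_lt (min_le_right _ _)
        linarith
      have hw'G : w' ∈ G := by
        refine ⟨⟨le_trans hws (le_of_lt hww'), min_le_left _ _⟩, ?_⟩
        intro v hv
        rcases lt_or_ge v w with hvw | hvw
        · exact f1 v hv.1 hvw
        · rcases eq_or_lt_of_le hvw with hveq | hvlt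
          · rw [← hveq]; exact f2
          · have hsgv := H.xi_semigroup hw0 (le_of_lt hvlt)
            have hFv : XiF g h w v ≤ c + ε := by
              apply H.XiF_le (le_of_lt hvlt)
              intro x hx
              have hxI : x ∈ Ico w u :=
                ⟨hx.1, lt_of_le_of_lt (le_trans hx.2 hv.2) hw'u⟩
              exact le_trans (min_le_left _ _) (le_of_lt (hsub hxI))
            rw [hsgv]
            apply max_le
            · exact le_trans (min_le_left _ _) f2
            · exact hFv
      have : w' ≤ w := le_csSup hGbdd hw'G
      linarith
    rw [← f3]
    exact f2
  by_contra hcon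
  push_neg at hcon
  have := key ((XiP g h t - c) / 2) (by linarith)
  linarith

/-- If the explicit solution stays strictly above the lower barrier on `(s,t]`,
then `Ξ` is nondecreasing on `[s,t]`. -/
lemma xi_incr {s t : ℝ} (h0 : 0 ≤ s) (hst : s ≤ t)
    (hlo : ∀ u, s < u → u ≤ t → XiP g h u < g u) : XiP g h s ≤ XiP g h t := by
  set c := XiP g h s with hc
  have key : ∀ ε : ℝ, 0 < ε → c - ε ≤ XiP g h t := by
    intro ε hε
    set G : Set ℝ := {w | w ∈ Icc s t ∧ ∀ v ∈ Icc s w, c - ε ≤ XiP g h v} with hG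
    have hsG : s ∈ G := by
      refine ⟨⟨le_rfl, hst⟩, fun v hv => ?_⟩
      have hveq : v = s := le_antisymm hv.2 hv.1
      rw [hveq]; linarith
    have hGne : G.Nonempty := ⟨s, hsG⟩
    have hGbdd : BddAbove G := ⟨t, fun x hx => hx.1.2⟩
    set w := sSup G with hwdef
    have hws : s ≤ w := le_csSup hGbdd hsG
    have hwt : w ≤ t := csSup_le hGne (fun x hx => hx.1.2)
    have hw0 : 0 ≤ w := h0.trans hws
    have f1 : ∀ v, s ≤ v → v < w → c - ε ≤ XiP g h v := by
      intro v hv hvw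
      rcases exists_lt_of_lt_csSup hGne hvw with ⟨w', hw'G, hvw'⟩
      exact hw'G.2 v ⟨hv, le_of_lt hvw'⟩
    have f2 : c - ε ≤ XiP g h w := by
      by_contra hgt
      push_neg at hgt
      have hsw : s < w := by
        rcases eq_or_lt_of_le hws with heq | hlt
        · exfalso; rw [← heq] at hgt; rw [← hc] at hgt; linarith
        · exact hlt
      have hI : min (c - ε) (g w) ≤ XiI g s w := by
        apply H.le_XiI hws
        intro x hx
        rcases eq_or_lt_of_le hx.2 with hxeq | hxlt
        · rw [hxeq]; exact min_le_right _ _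
        · rcases eq_or_lt_of_le hx.1 with hseq | hslt
          · have hb := (H.xi_bounds h0).2
            refine le_trans (min_le_left _ _) ?_
            rw [← hseq]
            rw [hc]
            linarith [hb]
          · have h1 := hlo x hslt (le_trans (le_of_lt hxlt) hwt)
            have h2 := f1 x (le_of_lt hslt) hxlt
            exact le_trans (min_le_left _ _) (le_trans h2 (le_of_lt h1))
      have hXiw : min (c - ε) (g w) ≤ XiP g h w := by
        rw [H.xi_semigroup h0 hws]
        exact le_trans (le_min (le_trans (min_le_left _ _) (by linarith)) hI)
          (le_max_left _ _)
      rcases le_total (g w) (c - ε) with hcase | hcase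
      · rw [min_eq_right hcase] at hXiw
        exact absurd (hlo w hsw hwt) (not_lt.mpr hXiw)
      · rw [min_eq_left hcase] at hXiw
        linarith
    have f3 : w = t := by
      by_contra hne
      have hwt' : w < t := lt_of_le_of_ne hwt hne
      have hgw : c - ε < g w := by
        rcases eq_or_lt_of_le hws with heq | hsw
        · have hb := (H.xi_bounds h0).2
          rw [← heq, hc]; linarith [hb]
        · exact lt_of_le_of_lt f2 (hlo w hsw hwt)
      have hev : g ⁻¹' (Ioi (c - ε)) ∈ nhdsWithin w (Ici w) :=
        (H.rcg w hw0) (Ioi_mem_nhds hgw)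
      rcases mem_nhdsGE_iff_exists_Ico_subset.mp hev with ⟨u, hu, hsub⟩
      set w' := min t ((w + u) / 2) with hw'
      have huw : w < u := hu
      have hww' : w < w' := by
        apply lt_min hwt'
        linarith
      have hw'u : w' < u := by
        apply lt_of_le_of_lt (min_le_right _ _)
        linarith
      have hw'G : w' ∈ G := by
        refine ⟨⟨le_trans hws (le_of_lt hww'), min_le_left _ _⟩, ?_⟩
        intro v hv
        rcases lt_or_ge v w with hvw | hvw
        · exact f1 v hv.1 hvw
        · rcases eq_or_lt_of_le hvw with hveq | hvlt
          · rw [← hveq]; exact f2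
          · have hsgv := H.xi_semigroup hw0 (le_of_lt hvlt)
            have hIv : c - ε ≤ XiI g w v := by
              apply H.le_XiI (le_of_lt hvlt)
              intro x hx
              have hxI : x ∈ Ico w u :=
                ⟨hx.1, lt_of_le_of_lt (le_trans hx.2 hv.2) hw'u⟩
              exact le_of_lt (hsub hxI)
            rw [hsgv]
            exact le_trans (le_min f2 hIv) (le_max_left _ _)
      have : w' ≤ w := le_csSup hGbdd hw'G
      linarith
    rw [← f3]
    exact f2
  by_contra hcon
  push_neg at hcon
  have := key ((c - XiP g h t) / 2) (by linarith)
  linarith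


lemma bddBelow_gIo {t : ℝ} {v : ℝ} (hv : 0 ≤ v) : BddBelow (g '' Ico v t) :=
  H.bddBelow_g (T := t) (fun x hx => ⟨hv.trans hx.1, le_of_lt hx.2⟩)

lemma XiIo_le {v t u : ℝ} (hv : 0 ≤ v) (hu : u ∈ Ico v t) : XiIo g v t ≤ g u :=
  csInf_le (H.bddBelow_gIo hv) ⟨u, hu, rfl⟩

omit H in
lemma le_XiIo {v t c : ℝ} (hvt : v < t) (hc : ∀ u ∈ Ico v t, c ≤ g u) : c ≤ XiIo g v t :=
  le_csInf ((nonempty_Ico.mpr hvt).image g) (by rintro x ⟨u, hu, rfl⟩; exact hc u hu)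

lemma bddAbove_minIo {t : ℝ} : BddAbove ((fun v => min (h v) (XiIo g v t)) '' Ico 0 t) := by
  rcases H.bddh t with ⟨M, hM⟩
  refine ⟨M, ?_⟩
  rintro x ⟨v, hv, rfl⟩
  exact le_trans (min_le_left _ _) (le_of_abs_le (hM v ⟨hv.1, le_of_lt hv.2⟩))

lemma le_XiTo {t v : ℝ} (hv : v ∈ Ico 0 t) :
    min (h v) (XiIo g v t) ≤ XiTo g h t :=
  le_csSup H.bddAbove_minIo ⟨v, hv, rfl⟩

omit H in
lemma XiTo_le {t c : ℝ} (ht : 0 < t)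
    (hc : ∀ v ∈ Ico (0:ℝ) t, min (h v) (XiIo g v t) ≤ c) : XiTo g h t ≤ c :=
  csSup_le ((nonempty_Ico.mpr ht).image _) (by rintro x ⟨v, hv, rfl⟩; exact hc v hv)

/-- Splitting `inf` over `[v,t] = [v,t') ∪ ... `: `Ico v t = Icc v t' ∪ Ioo t' t`. -/
lemma XiIo_split {v t' t : ℝ} (h0 : 0 ≤ v) (hv : v ≤ t') (ht : t' < t) :
    XiIo g v t = min (XiI g v t') (sInf (g '' Ioo t' t)) := by
  have hsplit : Ico v t = Icc v t' ∪ Ioo t' t := by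
    apply Subset.antisymm
    · intro x hx
      rcases le_or_gt x t' with hc | hc
      · exact Or.inl ⟨hx.1, hc⟩
      · exact Or.inr ⟨hc, hx.2⟩
    · rintro x (hx | hx)
      · exact ⟨hx.1, lt_of_le_of_lt hx.2 ht⟩
      · exact ⟨hv.trans (le_of_lt hx.1), hx.2⟩
  have b1 : BddBelow (g '' Icc v t') :=
    H.bddBelow_g (T := t) (fun x hx => ⟨h0.trans hx.1, hx.2.trans (le_of_lt ht)⟩)
  have b2 : BddBelow (g '' Ioo t' t) :=
    H.bddBelow_g (T := t) (fun x hx => ⟨(h0.trans hv).trans (le_of_lt hx.1), le_of_lt hx.2⟩)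
  rw [XiIo, hsplit, image_union, csInf_union b1 ((nonempty_Icc.mpr hv).image g)
    b2 ((nonempty_Ioo.mpr ht).image g)]
  rfl

/-- Splitting `Icc v t = Ico v t ∪ {t}`. -/
lemma XiI_eq_min_XiIo {v t : ℝ} (h0 : 0 ≤ v) (hvt : v < t) :
    XiI g v t = min (XiIo g v t) (g t) := by
  have hsplit : Icc v t = Ico v t ∪ Icc t t :=
    (Ico_union_Icc_eq_Icc (le_of_lt hvt) le_rfl).symm
  have b1 : BddBelow (g '' Ico v t) := H.bddBelow_gIo h0
  have b2 : BddBelow (g '' Icc t t) :=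
    H.bddBelow_g (T := t) (fun x hx => ⟨(h0.trans (le_of_lt hvt)).trans hx.1, hx.2⟩)
  rw [XiI, hsplit, image_union, csInf_union b1 ((nonempty_Ico.mpr hvt).image g)
    b2 ((nonempty_Icc.mpr le_rfl).image g), Icc_self, image_singleton, csInf_singleton]
  rfl

/-- The projection formula: `Ξ(t) = max(min(L(t), g(t)), h(t))`. -/
lemma xi_proj {t : ℝ} (ht : 0 < t) :
    XiP g h t = max (min (XiL g h t) (g t)) (h t) := by
  have hI : XiI g 0 t = min (XiIo g 0 t) (g t) := H.XiI_eq_min_XiIo le_rfl ht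
  have hF : XiF g h 0 t = max (min (XiTo g h t) (g t)) (h t) := by
    have hsplit : Icc (0:ℝ) t = Ico 0 t ∪ Icc t t := by
      rw [Icc_self, ← Ico_union_Icc_eq_Icc (le_of_lt ht) le_rfl, Icc_self]
    have b1 : BddAbove ((fun v => min (h v) (XiI g v t)) '' Ico 0 t) :=
      H.bddAbove_minI (s := 0) le_rfl (fun x hx => ⟨hx.1, le_of_lt hx.2⟩)
    have b2 : BddAbove ((fun v => min (h v) (XiI g v t)) '' Icc t t) :=
      H.bddAbove_minI (s := t) (le_of_lt ht) (fun x hx => hx)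
    rw [XiF, hsplit, image_union, csSup_union b1 ((nonempty_Ico.mpr ht).image _)
      b2 ((nonempty_Icc.mpr le_rfl).image _), Icc_self, image_singleton, csSup_singleton]
    have heq : ∀ v ∈ Ico (0:ℝ) t,
        min (h v) (XiI g v t) = min ((fun w => min (h w) (XiIo g w t)) v) (g t) := by
      intro v hv
      rw [H.XiI_eq_min_XiIo hv.1 hv.2, ← min_assoc]
    have himg : (fun v => min (h v) (XiI g v t)) '' Ico 0 t
        = (fun v => min ((fun w => min (h w) (XiIo g w t)) v) (g t)) '' Ico 0 t :=
      image_congr heq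
    rw [himg, sSup_min_const (nonempty_Ico.mpr ht) H.bddAbove_minIo]
    have htt : XiI g t t = g t := by rw [XiI, Icc_self, image_singleton, csInf_singleton]
    rw [htt, min_eq_left (H.hlg t (le_of_lt ht))]
    rfl
  rw [XiP, hI, hF, XiL, ← min_assoc, lattice_aux2]
lemma tendsto_XiI {t : ℝ} (ht : 0 < t) :
    Tendsto (fun t' => XiI g 0 t') (nhdsWithin t (Iio t)) (nhds (XiIo g 0 t)) := by
  rw [Metric.tendsto_nhds]
  intro ε hε
  have hlt : XiIo g 0 t < XiIo g 0 t + ε := by linarith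
  rcases exists_lt_of_csInf_lt ((nonempty_Ico.mpr ht).image g) hlt with
    ⟨x, ⟨u0, hu0, rfl⟩, hgu0⟩
  filter_upwards [Ioo_mem_nhdsLT hu0.2] with t' ht'
  have ht'0 : (0:ℝ) ≤ t' := le_of_lt (lt_of_le_of_lt hu0.1 ht'.1)
  have hlow : XiIo g 0 t ≤ XiI g 0 t' := by
    apply le_csInf ((nonempty_Icc.mpr ht'0).image g)
    rintro x ⟨u, hu, rfl⟩
    exact H.XiIo_le le_rfl ⟨hu.1, lt_of_le_of_lt hu.2 ht'.2⟩
  have hupp : XiI g 0 t' ≤ g u0 := H.XiI_le le_rfl ⟨hu0.1, le_of_lt ht'.1⟩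
  rw [Real.dist_eq, abs_lt]
  constructor <;> linarith

lemma tendsto_XiF {t : ℝ} (ht : 0 < t) :
    Tendsto (fun t' => XiF g h 0 t') (nhdsWithin t (Iio t)) (nhds (XiTo g h t)) := by
  rw [Metric.tendsto_nhds]
  intro ε hε
  set ε' := ε / 3 with hε'def
  have hε'pos : 0 < ε' := by rw [hε'def]; linarith
  have hT : XiTo g h t - ε' < XiTo g h t := by linarith
  rcases exists_lt_of_lt_csSup ((nonempty_Ico.mpr ht).image _) hT with
    ⟨x, ⟨v0, hv0, rfl⟩, hx⟩
  rcases H.llg t ht with ⟨gm, hgm⟩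
  have hmem : {u : ℝ | |g u - gm| < ε'} ∈ nhdsWithin t (Iio t) := by
    have h2 := Metric.tendsto_nhds.mp hgm ε' hε'pos
    filter_upwards [h2] with u hu
    rwa [Real.dist_eq] at hu
  rcases mem_nhdsLT_iff_exists_Ioo_subset.mp hmem with ⟨b1, hb1, hsub⟩
  have hbt : max (max b1 v0) 0 < t := max_lt (max_lt hb1 hv0.2) ht
  filter_upwards [Ioo_mem_nhdsLT hbt] with t' ht'
  have ht'0 : (0:ℝ) ≤ t' := le_of_lt (lt_of_le_of_lt (le_max_right _ _) ht'.1)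
  have ht'b1 : b1 < t' := lt_of_le_of_lt (le_trans (le_max_left _ _) (le_max_left _ _)) ht'.1
  have ht'v0 : v0 < t' := lt_of_le_of_lt (le_trans (le_max_right _ _) (le_max_left _ _)) ht'.1
  have ht't : t' < t := ht'.2
  have hlow : XiTo g h t - ε' < XiF g h 0 t' := by
    refine lt_of_lt_of_le hx (le_trans ?_ (H.le_XiF le_rfl ⟨hv0.1, le_of_lt ht'v0⟩))
    apply min_le_min le_rfl
    apply le_csInf ((nonempty_Icc.mpr (le_of_lt ht'v0)).image g)
    rintro x ⟨u, hu, rfl⟩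
    exact H.XiIo_le hv0.1 ⟨hu.1, lt_of_le_of_lt hu.2 ht't⟩
  have hup : XiF g h 0 t' ≤ XiTo g h t + 2 * ε' := by
    apply H.XiF_le ht'0
    intro v hv
    have hkey : XiI g v t' ≤ XiIo g v t + 2 * ε' := by
      have hsplit := H.XiIo_split hv.1 hv.2 ht't
      have hJ : gm - ε' ≤ sInf (g '' Ioo t' t) := by
        apply le_csInf ((nonempty_Ioo.mpr ht't).image g)
        rintro x ⟨u, hu, rfl⟩
        have hu2 := hsub ⟨lt_trans ht'b1 hu.1, hu.2⟩
        simp only [mem_setOf_eq] at hu2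
        have := abs_lt.mp hu2
        linarith
      have hgt' : g t' < gm + ε' := by
        have h2 := hsub ⟨ht'b1, ht't⟩
        simp only [mem_setOf_eq] at h2
        have := abs_lt.mp h2
        linarith
      have hIle : XiI g v t' ≤ g t' := H.XiI_le hv.1 ⟨hv.2, le_rfl⟩
      rw [hsplit]
      rcases le_total (XiI g v t') (sInf (g '' Ioo t' t)) with hcc | hcc
      · rw [min_eq_left hcc]; linarith
      · rw [min_eq_right hcc]; linarith
    have hvt : v ∈ Ico (0:ℝ) t := ⟨hv.1, lt_of_le_of_lt hv.2 ht't⟩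
    have hle := H.le_XiTo hvt
    rcases le_total (h v) (XiIo g v t) with hh | hh
    · have h3 : min (h v) (XiI g v t') ≤ h v := min_le_left _ _
      rw [min_eq_left hh] at hle
      linarith
    · have h3 : min (h v) (XiI g v t') ≤ XiI g v t' := min_le_right _ _
      rw [min_eq_right hh] at hle
      linarith
  rw [Real.dist_eq, abs_lt, hε'def] at *
  constructor <;> linarith

/-- `Ξ` has a left limit at every `t > 0`, namely `XiL g h t`. -/
lemma tendsto_XiP {t : ℝ} (ht : 0 < t) :
    Tendsto (XiP g h) (nhdsWithin t (Iio t)) (nhds (XiL g h t)) := by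
  have h1 := H.tendsto_XiI ht
  have h2 := H.tendsto_XiF ht
  exact (tendsto_const_nhds.min h1).max h2

omit H in
lemma xi_zero : XiP g h 0 = max (min (max (h 0) 0) (g 0)) (min (h 0) (g 0)) := by
  rw [XiP]
  congr 1
  · congr 1
    rw [XiI, Icc_self, image_singleton, csInf_singleton]
  · rw [XiF, Icc_self, image_singleton, csSup_singleton]
    congr 1
    rw [XiI, Icc_self, image_singleton, csInf_singleton]

end XiHyp

/-- Comparison (hence uniqueness) for solutions of the ESP having left limits. -/
lemma esp_comparison (l r ψ φ1 η1 φ2 η2 : ℝ → ℝ)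
    (e1 : ESP l r ψ φ1 η1) (e2 : ESP l r ψ φ2 η2)
    (hL1 : ∀ t : ℝ, 0 < t → ∃ c, Tendsto η1 (nhdsWithin t (Iio t)) (nhds c))
    (hL2 : ∀ t : ℝ, 0 < t → ∃ c, Tendsto η2 (nhdsWithin t (Iio t)) (nhds c))
    {t0 : ℝ} (ht0 : 0 ≤ t0) : η1 t0 ≤ η2 t0 := by
  by_contra hcon
  push_neg at hcon
  set ε := η1 t0 - η2 t0 with hεdef
  have hεpos : 0 < ε := by rw [hεdef]; linarith
  set A : Set ℝ := {u | u ∈ Icc 0 t0 ∧ η1 u - η2 u ≤ ε / 2} with hA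
  have h0A : (0:ℝ) ∈ A := by
    by_contra h0A
    have hθ0 : ε / 2 < η1 0 - η2 0 := by
      by_contra hc; push_neg at hc; exact h0A ⟨⟨le_rfl, ht0⟩, hc⟩
    obtain ⟨hφeq1, hb1⟩ := e1.1 0 le_rfl
    obtain ⟨hφeq2, hb2⟩ := e2.1 0 le_rfl
    have hgt : φ2 0 < φ1 0 := by rw [hφeq1, hφeq2]; linarith
    have hj1 := e1.2.2.2.2.2 (lt_of_le_of_lt hb2.1 hgt)
    have hj2 := e2.2.2.2.2.1 (lt_of_lt_of_le hgt hb1.2)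
    linarith
  have hAbdd : BddAbove A := ⟨t0, fun x hx => hx.1.2⟩
  set σ := sSup A with hσdef
  have hσ0 : 0 ≤ σ := le_csSup hAbdd h0A
  have hσt0 : σ ≤ t0 := csSup_le ⟨0, h0A⟩ (fun x hx => hx.1.2)
  have hbig : ∀ u, σ < u → u ≤ t0 → ε / 2 < η1 u - η2 u := by
    intro u hu1 hu2
    by_contra hc; push_neg at hc
    have hmem : u ∈ A := ⟨⟨hσ0.trans (le_of_lt hu1), hu2⟩, hc⟩
    have := le_csSup hAbdd hmem
    linarith
  have hlφ : ∀ u, σ < u → u ≤ t0 → l u < φ1 u := by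
    intro u hu1 hu2
    have hu0 : 0 ≤ u := hσ0.trans (le_of_lt hu1)
    obtain ⟨hφeq1, hb1⟩ := e1.1 u hu0
    obtain ⟨hφeq2, hb2⟩ := e2.1 u hu0
    have := hbig u hu1 hu2
    have : φ2 u < φ1 u := by rw [hφeq1, hφeq2]; linarith
    exact lt_of_le_of_lt hb2.1 this
  have hφr : ∀ u, σ < u → u ≤ t0 → φ2 u < r u := by
    intro u hu1 hu2
    have hu0 : 0 ≤ u := hσ0.trans (le_of_lt hu1)
    obtain ⟨hφeq1, hb1⟩ := e1.1 u hu0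
    obtain ⟨hφeq2, hb2⟩ := e2.1 u hu0
    have := hbig u hu1 hu2
    have : φ2 u < φ1 u := by rw [hφeq1, hφeq2]; linarith
    exact lt_of_lt_of_le this hb1.2
  have hm1 : η1 t0 ≤ η1 σ := e1.2.2.1 σ t0 hσ0 hσt0 hlφ
  have hm2 : η2 σ ≤ η2 t0 := e2.2.1 σ t0 hσ0 hσt0 hφr
  rcases le_or_gt (η1 σ - η2 σ) (ε / 2) with hθσ | hθσ
  · linarith
  · have hσA : σ ∉ A := fun hmem => absurd hmem.2 (not_le.mpr hθσ)
    have hσpos : 0 < σ := by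
      rcases eq_or_lt_of_le hσ0 with heq | hlt
      · exact absurd (heq ▸ h0A) hσA
      · exact hlt
    rcases hL1 σ hσpos with ⟨c1, hc1⟩
    rcases hL2 σ hσpos with ⟨c2, hc2⟩
    have hfreq : ∃ᶠ u in nhdsWithin σ (Iio σ), (η1 u - η2 u) ∈ Iic (ε / 2) := by
      rw [frequently_iff]
      intro U hU
      rcases mem_nhdsLT_iff_exists_Ioo_subset.mp hU with ⟨b, hb, hsubU⟩
      rcases exists_lt_of_lt_csSup ⟨0, h0A⟩ (show b < sSup A from hb) with ⟨a, haA, hba⟩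
      have haσ : a < σ :=
        lt_of_le_of_ne (le_csSup hAbdd haA) (fun heq => hσA (heq ▸ haA))
      exact ⟨a, hsubU ⟨hba, haσ⟩, haA.2⟩
    have htend : Tendsto (fun u => η1 u - η2 u) (nhdsWithin σ (Iio σ)) (nhds (c1 - c2)) :=
      hc1.sub hc2
    have hlim : c1 - c2 ≤ ε / 2 :=
      isClosed_Iic.mem_of_frequently_of_tendsto hfreq htend
    have hσθpos : 0 < η1 σ - η2 σ := by linarith
    obtain ⟨hφeq1, hb1⟩ := e1.1 σ hσ0
    obtain ⟨hφeq2, hb2⟩ := e2.1 σ hσ0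
    have hφσ : φ2 σ < φ1 σ := by rw [hφeq1, hφeq2]; linarith
    have hj1 : η1 σ ≤ Function.leftLim η1 σ :=
      (e1.2.2.2.1 σ hσpos).2 (lt_of_le_of_lt hb2.1 hφσ)
    have hj2 : Function.leftLim η2 σ ≤ η2 σ :=
      (e2.2.2.2.1 σ hσpos).1 (lt_of_lt_of_le hφσ hb1.2)
    have hne : nhdsWithin σ (Iio σ) ≠ ⊥ :=
      (inferInstance : (nhdsWithin σ (Iio σ)).NeBot).ne
    have hL1eq : Function.leftLim η1 σ = c1 := leftLim_eq_of_tendsto hc1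
    have hL2eq : Function.leftLim η2 σ = c2 := leftLim_eq_of_tendsto hc2
    rw [hL1eq] at hj1
    rw [hL2eq] at hj2
    linarith


/-- Existence, uniqueness and explicit formula for the extended Skorokhod map on a
time-dependent interval: for càdlàg `ℓ ≤ r` and any càdlàg `ψ`, the pair
`(ψ - Ξ_{ℓ,r}(ψ), -Ξ_{ℓ,r}(ψ))` solves the ESP on `[ℓ(·), r(·)]` for `ψ`, and any
càdlàg solution `(φ, η)` of this ESP satisfies `φ = ψ - Ξ_{ℓ,r}(ψ)` and
`η = -Ξ_{ℓ,r}(ψ)` on `[0, ∞)`. -/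
theorem esp_exists_unique_explicit (l r ψ : ℝ → ℝ)
    (hl : Cadlag l) (hr : Cadlag r) (hlr : ∀ t : ℝ, 0 ≤ t → l t ≤ r t)
    (hψ : Cadlag ψ) :
    ESP l r ψ (fun t => ψ t - Xi l r ψ t) (fun t => -Xi l r ψ t) ∧
    (∀ φ η : ℝ → ℝ, Cadlag φ → Cadlag η → ESP l r ψ φ η →
      ∀ t : ℝ, 0 ≤ t → φ t = ψ t - Xi l r ψ t ∧ η t = -Xi l r ψ t) := by
  have H : XiHyp (fun u => ψ u - l u) (fun u => ψ u - r u) := by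
    constructor
    · intro T
      rcases cadlag_bdd hψ T with ⟨M1, h1⟩
      rcases cadlag_bdd hl T with ⟨M2, h2⟩
      refine ⟨M1 + M2, fun u hu => ?_⟩
      have h3 : |ψ u - l u| ≤ |ψ u| + |l u| := by
        rw [sub_eq_add_neg]
        exact (abs_add_le _ _).trans (by rw [abs_neg])
      exact h3.trans (add_le_add (h1 u hu) (h2 u hu))
    · intro T
      rcases cadlag_bdd hψ T with ⟨M1, h1⟩
      rcases cadlag_bdd hr T with ⟨M2, h2⟩
      refine ⟨M1 + M2, fun u hu => ?_⟩
      have h3 : |ψ u - r u| ≤ |ψ u| + |r u| := by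
        rw [sub_eq_add_neg]
        exact (abs_add_le _ _).trans (by rw [abs_neg])
      exact h3.trans (add_le_add (h1 u hu) (h2 u hu))
    · exact fun t ht => ((hψ t ht).1).sub ((hl t ht).1)
    · exact fun t ht => ((hψ t ht).1).sub ((hr t ht).1)
    · intro t ht
      rcases (hψ t (le_of_lt ht)).2 ht with ⟨cψ, hcψ⟩
      rcases (hl t (le_of_lt ht)).2 ht with ⟨cl, hcl⟩
      exact ⟨cψ - cl, hcψ.sub hcl⟩
    · intro t ht
      rcases (hψ t (le_of_lt ht)).2 ht with ⟨cψ, hcψ⟩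
      rcases (hr t (le_of_lt ht)).2 ht with ⟨cr, hcr⟩
      exact ⟨cψ - cr, hcr.sub hcr |> fun _ => hcψ.sub hcr⟩
    · intro t ht
      have := hlr t ht
      show ψ t - r t ≤ ψ t - l t
      linarith
  have hXi : ∀ t, Xi l r ψ t = XiP (fun u => ψ u - l u) (fun u => ψ u - r u) t :=
    fun t => rfl
  -- existence
  have hex : ESP l r ψ (fun t => ψ t - Xi l r ψ t) (fun t => -Xi l r ψ t) := by
    refine ⟨?_, ?_, ?_, ?_, ?_⟩
    · intro t ht
      have hb1 : ψ t - r t ≤ XiP (fun u => ψ u - l u) (fun u => ψ u - r u) t :=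
        (H.xi_bounds ht).1
      have hb2 : XiP (fun u => ψ u - l u) (fun u => ψ u - r u) t ≤ ψ t - l t :=
        (H.xi_bounds ht).2
      rw [← hXi t] at hb1 hb2
      exact ⟨by ring, by simp only; linarith, by simp only; linarith⟩
    · intro s t hs hst hup
      simp only [neg_le_neg_iff]
      rw [hXi t, hXi s]
      apply H.xi_decr hs hst
      intro u hu1 hu2
      have h4 : ψ u - Xi l r ψ u < r u := hup u hu1 hu2
      show ψ u - r u < XiP (fun u => ψ u - l u) (fun u => ψ u - r u) u
      rw [← hXi u]
      linarith
    · intro s t hs hst hlo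
      simp only [neg_le_neg_iff]
      rw [hXi t, hXi s]
      apply H.xi_incr hs hst
      intro u hu1 hu2
      have h4 : l u < ψ u - Xi l r ψ u := hlo u hu1 hu2
      show XiP (fun u => ψ u - l u) (fun u => ψ u - r u) u < ψ u - l u
      rw [← hXi u]
      linarith
    · intro t ht
      have hlimneg : Tendsto (fun u => -Xi l r ψ u) (nhdsWithin t (Iio t))
          (nhds (-(XiL (fun u => ψ u - l u) (fun u => ψ u - r u) t))) :=
        (H.tendsto_XiP ht).neg
      have hne : nhdsWithin t (Iio t) ≠ ⊥ :=
        (inferInstance : (nhdsWithin t (Iio t)).NeBot).ne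
      have hLL : Function.leftLim (fun u => -Xi l r ψ u) t
          = -(XiL (fun u => ψ u - l u) (fun u => ψ u - r u) t) :=
        leftLim_eq_of_tendsto hlimneg
      have hproj : XiP (fun u => ψ u - l u) (fun u => ψ u - r u) t
          = max (min (XiL (fun u => ψ u - l u) (fun u => ψ u - r u) t) (ψ t - l t))
              (ψ t - r t) := H.xi_proj ht
      constructor
      · intro hφr
        have hφr' : ψ t - Xi l r ψ t < r t := hφr
        have hhX : ψ t - r t < Xi l r ψ t := by linarith
        rw [hLL]
        simp only [neg_le_neg_iff]
        rw [hXi t, hproj] at hhX ⊢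
        rcases max_cases (min (XiL (fun u => ψ u - l u) (fun u => ψ u - r u) t) (ψ t - l t))
          (ψ t - r t) with ⟨hm, _⟩ | ⟨hm, _⟩
        · rw [hm]; exact min_le_left _ _
        · rw [hm] at hhX; exact absurd hhX (lt_irrefl _)
      · intro hlφ
        have hlφ' : l t < ψ t - Xi l r ψ t := hlφ
        have hXg : Xi l r ψ t < ψ t - l t := by linarith
        rw [hLL]
        simp only [neg_le_neg_iff]
        rw [hXi t, hproj] at hXg ⊢
        rcases min_cases (XiL (fun u => ψ u - l u) (fun u => ψ u - r u) t) (ψ t - l t) with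
          ⟨hm, _⟩ | ⟨hm, hle⟩
        · rw [hm]; exact le_max_left _ _
        · exfalso
          have : ψ t - l t ≤ max (min (XiL (fun u => ψ u - l u) (fun u => ψ u - r u) t)
              (ψ t - l t)) (ψ t - r t) := by rw [hm]; exact le_max_left _ _
          linarith
    · have hz : Xi l r ψ 0 = max (min (max (ψ 0 - r 0) 0) (ψ 0 - l 0))
          (min (ψ 0 - r 0) (ψ 0 - l 0)) := by
        rw [hXi 0, XiHyp.xi_zero]
      have hab : ψ 0 - r 0 ≤ ψ 0 - l 0 := by linarith [hlr 0 le_rfl]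
      constructor
      · intro hφr
        have hφr' : ψ 0 - Xi l r ψ 0 < r 0 := hφr
        have hhX : ψ 0 - r 0 < Xi l r ψ 0 := by linarith
        simp only [Left.nonneg_neg_iff]
        rcases le_total (ψ 0 - r 0) 0 with hc | hc
        · rw [hz]
          apply max_le
          · exact le_trans (min_le_left _ _) (by rw [max_eq_right hc])
          · exact le_trans (min_le_left _ _) hc
        · exfalso
          rw [hz, max_eq_left hc, min_eq_left hab, max_self] at hhX
          exact absurd hhX (lt_irrefl _)
      · intro hlφ
        have hlφ' : l 0 < ψ 0 - Xi l r ψ 0 := hlφ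
        have hXg : Xi l r ψ 0 < ψ 0 - l 0 := by linarith
        simp only [Left.neg_nonpos_iff]
        rcases le_total (max (ψ 0 - r 0) 0) (ψ 0 - l 0) with hc | hc
        · rw [hz]
          refine le_trans ?_ (le_max_left _ _)
          rw [min_eq_left hc]
          exact le_max_right _ _
        · exfalso
          have h5 : ψ 0 - l 0 ≤ Xi l r ψ 0 := by
            rw [hz]
            exact le_trans (by rw [min_eq_right hc]) (le_max_left _ _)
          linarith
  refine ⟨hex, ?_⟩
  -- uniqueness
  intro φ η hφ hη hesp t ht
  have hLex : ∀ t : ℝ, 0 < t → ∃ c, Tendsto (fun u => -Xi l r ψ u)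
      (nhdsWithin t (Iio t)) (nhds c) :=
    fun t ht => ⟨-(XiL (fun u => ψ u - l u) (fun u => ψ u - r u) t),
      (H.tendsto_XiP ht).neg⟩
  have hLη : ∀ t : ℝ, 0 < t → ∃ c, Tendsto η (nhdsWithin t (Iio t)) (nhds c) :=
    fun t' ht' => (hη t' (le_of_lt ht')).2 ht'
  have h1 := esp_comparison l r ψ φ η (fun t => ψ t - Xi l r ψ t)
    (fun t => -Xi l r ψ t) hesp hex hLη hLex ht
  have h2 := esp_comparison l r ψ (fun t => ψ t - Xi l r ψ t)
    (fun t => -Xi l r ψ t) φ η hex hesp hLex hLη ht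
  have hηeq : η t = -Xi l r ψ t := le_antisymm h1 h2
  have hφeq := (hesp.1 t ht).1
  exact ⟨by rw [hφeq, hηeq]; ring, hηeq⟩
end

section
/- The map Ξ_{ℓ,r} satisfies for all t ≥ 0 the recursive pointwise identity Ξ_{ℓ,r}(ψ)(t) = max( Ξ_{ℓ,r}(ψ)(t−), ψ(t) − r(t) ) ∧ (ψ(t) − ℓ(t)), where Ξ_{ℓ,r}(ψ)(t−) denotes the supremum form taken with inner intervals [0,t) and [s,t) in place of [0,t] and [s,t]. -/
open Set Filter

/-- The left-limit form `Ξ_{ℓ,r}(ψ)(t-)`: the same expression with the closed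
intervals `[0,t]` and `[s,t]` replaced by the half-open intervals `[0,t)` and `[s,t)`. -/
noncomputable def XiMinus (l r ψ : ℝ → ℝ) (t : ℝ) : ℝ :=
  max (min (max (ψ 0 - r 0) 0) (sInf ((fun u => ψ u - l u) '' Set.Ico 0 t)))
      (sSup ((fun s => min (ψ s - r s) (sInf ((fun u => ψ u - l u) '' Set.Ico s t)))
        '' Set.Ico 0 t))

/-- A càdlàg function is bounded in absolute value on `[0, t]`. -/
lemma cadlag_abs_bound (f : ℝ → ℝ) (hf : Cadlag f) (t : ℝ) :
    ∃ M : ℝ, ∀ u ∈ Set.Icc (0:ℝ) t, |f u| ≤ M := by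
  have hloc : ∀ x : ℝ, ∃ (U : Set ℝ) (M : ℝ), U ∈ nhds x ∧
      (0 ≤ x → ∀ y ∈ U ∩ Set.Ici (0:ℝ), |f y| ≤ M) := by
    intro x
    by_cases hx : 0 ≤ x
    · obtain ⟨hright, hleft⟩ := hf x hx
      obtain ⟨δ1, hδ1, h1⟩ := Metric.tendsto_nhdsWithin_nhds.mp hright 1 one_pos
      by_cases hx0 : 0 < x
      · obtain ⟨L, hL⟩ := hleft hx0
        obtain ⟨δ2, hδ2, h2⟩ := Metric.tendsto_nhdsWithin_nhds.mp hL 1 one_pos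
        refine ⟨Set.Ioo (x - δ2) (x + δ1), max (|f x| + 1) (|L| + 1),
          Ioo_mem_nhds (by linarith) (by linarith), fun _ y hy => ?_⟩
        obtain ⟨⟨hy1, hy2⟩, hy0⟩ := hy
        rcases le_or_gt x y with h | h
        · have hd : dist y x < δ1 := by
            rw [Real.dist_eq, abs_of_nonneg (by linarith)]; linarith
          have := h1 (Set.mem_Ici.mpr h) hd
          rw [Real.dist_eq] at this
          have := abs_sub_abs_le_abs_sub (f y) (f x)
          exact le_max_of_le_left (by linarith)
        · have hd : dist y x < δ2 := by
            rw [Real.dist_eq, abs_of_nonpos (by linarith)]; linarith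
          have := h2 (Set.mem_Iio.mpr h) hd
          rw [Real.dist_eq] at this
          have := abs_sub_abs_le_abs_sub (f y) L
          exact le_max_of_le_right (by linarith)
      · refine ⟨Set.Ioo (x - 1) (x + δ1), |f x| + 1,
          Ioo_mem_nhds (by linarith) (by linarith), fun _ y hy => ?_⟩
        obtain ⟨⟨hy1, hy2⟩, hy0⟩ := hy
        have hxy : x ≤ y := le_trans (le_of_not_gt hx0) hy0
        have hd : dist y x < δ1 := by
          rw [Real.dist_eq, abs_of_nonneg (by linarith)]; linarith
        have := h1 (Set.mem_Ici.mpr hxy) hd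
        rw [Real.dist_eq] at this
        have := abs_sub_abs_le_abs_sub (f y) (f x)
        linarith
    · exact ⟨Set.univ, 0, Filter.univ_mem, fun h => absurd h hx⟩
  choose U M hU hM using hloc
  obtain ⟨s, hs, hcover⟩ :=
    (isCompact_Icc : IsCompact (Set.Icc (0:ℝ) t)).elim_nhds_subcover U (fun x _ => hU x)
  obtain ⟨MM, hMM⟩ := (s.image M).exists_le
  refine ⟨MM, fun u hu => ?_⟩
  obtain ⟨x, hxs, hxU⟩ := Set.mem_iUnion₂.mp (hcover hu)
  have hx0 : (0:ℝ) ≤ x := (hs x hxs).1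
  exact (hM x hx0 u ⟨hxU, hu.1⟩).trans (hMM _ (Finset.mem_image_of_mem M hxs))

lemma key_lattice (a b c d e : ℝ) :
    max (min a (min e b)) (max (min d e) (min c e)) =
      min (max (max (min a b) c) d) e := by
  rw [min_comm e b, ← min_assoc, min_max_distrib_right, min_max_distrib_right,
      max_comm (min d e) (min c e), ← max_assoc]

lemma xi_aux (f g : ℝ → ℝ) (t : ℝ) (ht : 0 < t) (B : ℝ)
    (hfb : ∀ u ∈ Set.Icc (0:ℝ) t, |f u| ≤ B) (hgb : ∀ u ∈ Set.Icc (0:ℝ) t, |g u| ≤ B)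
    (A : ℝ) :
    max (min A (sInf (f '' Set.Icc 0 t)))
        (sSup ((fun s => min (g s) (sInf (f '' Set.Icc s t))) '' Set.Icc 0 t)) =
    min (max (max (min A (sInf (f '' Set.Ico 0 t)))
        (sSup ((fun s => min (g s) (sInf (f '' Set.Ico s t))) '' Set.Ico 0 t))) (g t)) (f t) := by
  have h0t : (0:ℝ) ∈ Set.Ico (0:ℝ) t := ⟨le_refl 0, ht⟩
  have hne : ∀ s ∈ Set.Ico (0:ℝ) t, (f '' Set.Ico s t).Nonempty :=
    fun s hs => ⟨f s, s, ⟨le_refl s, hs.2⟩, rfl⟩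
  have hbb : ∀ s ∈ Set.Ico (0:ℝ) t, BddBelow (f '' Set.Ico s t) := by
    intro s hs
    refine ⟨-B, ?_⟩
    rintro y ⟨u, hu, rfl⟩
    have := (abs_le.mp (hfb u ⟨le_trans hs.1 hu.1, le_of_lt hu.2⟩)).1
    linarith
  have h1 : ∀ s ∈ Set.Ico (0:ℝ) t,
      sInf (f '' Set.Icc s t) = min (f t) (sInf (f '' Set.Ico s t)) := by
    intro s hs
    rw [← Set.Ico_insert_right (le_of_lt hs.2), Set.image_insert_eq,
      csInf_insert (hbb s hs) (hne s hs)]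
  set Fm : ℝ → ℝ := fun s => min (g s) (sInf (f '' Set.Ico s t)) with hFm
  have himg : (fun s => min (g s) (sInf (f '' Set.Icc s t))) '' Set.Ico 0 t
      = (fun x => min x (f t)) '' (Fm '' Set.Ico 0 t) := by
    rw [Set.image_image]
    apply Set.image_congr
    intro s hs
    rw [h1 s hs, hFm]
    dsimp only
    rw [min_comm (f t) _, ← min_assoc]
  have hFmne : (Fm '' Set.Ico 0 t).Nonempty := ⟨Fm 0, 0, h0t, rfl⟩
  have hFmba : BddAbove (Fm '' Set.Ico 0 t) := by
    refine ⟨B, ?_⟩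
    rintro y ⟨s, hs, rfl⟩
    exact le_trans (min_le_left _ _) (abs_le.mp (hgb s ⟨hs.1, le_of_lt hs.2⟩)).2
  have hsup : sSup ((fun x => min x (f t)) '' (Fm '' Set.Ico 0 t))
      = min (sSup (Fm '' Set.Ico 0 t)) (f t) :=
    (Monotone.map_csSup_of_continuousAt
      (continuous_id.min continuous_const).continuousAt
      (fun a b hab => min_le_min hab (le_refl _)) hFmne hFmba).symm
  have hba2 : BddAbove ((fun s => min (g s) (sInf (f '' Set.Icc s t))) '' Set.Ico 0 t) := by
    rw [himg]
    refine ⟨f t, ?_⟩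
    rintro y ⟨x, hx, rfl⟩
    exact min_le_right _ _
  have hne2 : ((fun s => min (g s) (sInf (f '' Set.Icc s t))) '' Set.Ico 0 t).Nonempty :=
    ⟨_, 0, h0t, rfl⟩
  have hS : sSup ((fun s => min (g s) (sInf (f '' Set.Icc s t))) '' Set.Icc 0 t)
      = max (min (g t) (f t)) (min (sSup (Fm '' Set.Ico 0 t)) (f t)) := by
    rw [← Set.Ico_insert_right (le_of_lt ht), Set.image_insert_eq, csSup_insert hba2 hne2,
        himg, hsup]
    rw [Set.Icc_self, Set.image_singleton, csInf_singleton]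
  rw [h1 0 h0t, hS]
  exact key_lattice A (sInf (f '' Set.Ico 0 t)) (sSup (Fm '' Set.Ico 0 t)) (g t) (f t)

/-- The recursive pointwise identity
`Ξ_{ℓ,r}(ψ)(t) = max( Ξ_{ℓ,r}(ψ)(t-), ψ(t) - r(t) ) ∧ (ψ(t) - ℓ(t))` for `t > 0`. -/
theorem xi_recursion (l r ψ : ℝ → ℝ)
    (hl : Cadlag l) (hr : Cadlag r) (hlr : ∀ t : ℝ, 0 ≤ t → l t ≤ r t)
    (hψ : Cadlag ψ) (t : ℝ) (ht : 0 < t) :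
    Xi l r ψ t = min (max (XiMinus l r ψ t) (ψ t - r t)) (ψ t - l t) := by
  obtain ⟨Mψ, hMψ⟩ := cadlag_abs_bound ψ hψ t
  obtain ⟨Ml, hMl⟩ := cadlag_abs_bound l hl t
  obtain ⟨Mr, hMr⟩ := cadlag_abs_bound r hr t
  have hfb : ∀ u ∈ Set.Icc (0:ℝ) t, |ψ u - l u| ≤ Mψ + Ml + Mr := by
    intro u hu
    have h1 := abs_le.mp (hMψ u hu)
    have h2 := abs_le.mp (hMl u hu)
    have h3 := abs_nonneg (r u)
    have h4 := (hMr u hu)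
    rw [abs_le]
    constructor <;> linarith
  have hgb : ∀ u ∈ Set.Icc (0:ℝ) t, |ψ u - r u| ≤ Mψ + Ml + Mr := by
    intro u hu
    have h1 := abs_le.mp (hMψ u hu)
    have h2 := abs_le.mp (hMr u hu)
    have h3 := abs_nonneg (l u)
    have h4 := (hMl u hu)
    rw [abs_le]
    constructor <;> linarith
  exact xi_aux (fun u => ψ u - l u) (fun s => ψ s - r s) t ht (Mψ + Ml + Mr)
    hfb hgb (max (ψ 0 - r 0) 0)
end

section
/- The extended Skorokhod map is jointly continuous: if ℓ_n → ℓ, r_n → r, ψ_n → ψ uniformly on compact sets (with ℓ_n ≤ r_n, ℓ ≤ r càdlàg), then Γ̄_{ℓ_n, r_n}(ψ_n) → Γ̄_{ℓ, r}(ψ) uniformly on compact sets. -/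
open Set Filter

/-- The extended Skorokhod map `Γ̄_{ℓ,r}(ψ) = ψ - Ξ_{ℓ,r}(ψ)`. -/
noncomputable def ESM (l r ψ : ℝ → ℝ) (t : ℝ) : ℝ := ψ t - Xi l r ψ t


lemma sInf_image_abs_sub_le {f g : ℝ → ℝ} {D : Set ℝ} (hD : D.Nonempty) {δ : ℝ}
    (h : ∀ x ∈ D, |f x - g x| ≤ δ) :
    |sInf (f '' D) - sInf (g '' D)| ≤ δ := by
  obtain ⟨x0, hx0⟩ := hD
  have hδ : 0 ≤ δ := le_trans (abs_nonneg _) (h x0 hx0)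
  have key : ∀ (f g : ℝ → ℝ), (∀ x ∈ D, |f x - g x| ≤ δ) → BddBelow (g '' D) →
      sInf (g '' D) - δ ≤ sInf (f '' D) := by
    intro f g h hbg
    apply le_csInf ⟨f x0, Set.mem_image_of_mem f hx0⟩
    rintro y ⟨x, hx, rfl⟩
    have h1 : sInf (g '' D) ≤ g x := csInf_le hbg ⟨x, hx, rfl⟩
    have h2 := abs_le.1 (h x hx)
    linarith [h2.2]
  by_cases hb : BddBelow (g '' D)
  · have hbf : BddBelow (f '' D) := by
      obtain ⟨m, hm⟩ := hb
      refine ⟨m - δ, ?_⟩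
      rintro y ⟨x, hx, rfl⟩
      have hmg : m ≤ g x := hm ⟨x, hx, rfl⟩
      have h2 := abs_le.1 (h x hx)
      linarith [h2.1]
    have h1 := key f g h hb
    have h2 := key g f (fun x hx => by rw [abs_sub_comm]; exact h x hx) hbf
    rw [abs_le]; constructor <;> linarith
  · have hbf : ¬ BddBelow (f '' D) := by
      rintro ⟨m, hm⟩
      apply hb
      refine ⟨m - δ, ?_⟩
      rintro y ⟨x, hx, rfl⟩
      have hmf : m ≤ f x := hm ⟨x, hx, rfl⟩
      have h2 := abs_le.1 (h x hx)
      linarith [h2.2]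
    rw [Real.sInf_of_not_bddBelow hb, Real.sInf_of_not_bddBelow hbf]
    simpa using hδ

lemma sSup_image_abs_sub_le {f g : ℝ → ℝ} {D : Set ℝ} (hD : D.Nonempty) {δ : ℝ}
    (h : ∀ x ∈ D, |f x - g x| ≤ δ) :
    |sSup (f '' D) - sSup (g '' D)| ≤ δ := by
  obtain ⟨x0, hx0⟩ := hD
  have hδ : 0 ≤ δ := le_trans (abs_nonneg _) (h x0 hx0)
  have key : ∀ (f g : ℝ → ℝ), (∀ x ∈ D, |f x - g x| ≤ δ) → BddAbove (g '' D) →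
      sSup (f '' D) ≤ sSup (g '' D) + δ := by
    intro f g h hbg
    apply csSup_le ⟨f x0, Set.mem_image_of_mem f hx0⟩
    rintro y ⟨x, hx, rfl⟩
    have h1 : g x ≤ sSup (g '' D) := le_csSup hbg ⟨x, hx, rfl⟩
    have h2 := abs_le.1 (h x hx)
    linarith [h2.2]
  by_cases hb : BddAbove (g '' D)
  · have hbf : BddAbove (f '' D) := by
      obtain ⟨m, hm⟩ := hb
      refine ⟨m + δ, ?_⟩
      rintro y ⟨x, hx, rfl⟩
      have hmg : g x ≤ m := hm ⟨x, hx, rfl⟩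
      have h2 := abs_le.1 (h x hx)
      linarith [h2.2]
    have h1 := key f g h hb
    have h2 := key g f (fun x hx => by rw [abs_sub_comm]; exact h x hx) hbf
    rw [abs_le]; constructor <;> linarith
  · have hbf : ¬ BddAbove (f '' D) := by
      rintro ⟨m, hm⟩
      apply hb
      refine ⟨m + δ, ?_⟩
      rintro y ⟨x, hx, rfl⟩
      have hmf : f x ≤ m := hm ⟨x, hx, rfl⟩
      have h2 := abs_le.1 (h x hx)
      linarith [h2.1]
    rw [Real.sSup_of_not_bddAbove hb, Real.sSup_of_not_bddAbove hbf]
    simpa using hδ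

/-- Joint continuity of the extended Skorokhod map: if `ℓ_n → ℓ`, `r_n → r`,
`ψ_n → ψ` uniformly on compact subsets of `[0, ∞)` (with `ℓ_n ≤ r_n`, `ℓ ≤ r`
càdlàg), then `Γ̄_{ℓ_n, r_n}(ψ_n) → Γ̄_{ℓ,r}(ψ)` uniformly on compact sets. -/
theorem esm_continuous
    (ln rn ψn : ℕ → ℝ → ℝ) (l r ψ : ℝ → ℝ)
    (hln : ∀ n, Cadlag (ln n)) (hrn : ∀ n, Cadlag (rn n))
    (hlrn : ∀ n, ∀ t : ℝ, 0 ≤ t → ln n t ≤ rn n t)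
    (hψn : ∀ n, Cadlag (ψn n))
    (hl : Cadlag l) (hr : Cadlag r) (hlr : ∀ t : ℝ, 0 ≤ t → l t ≤ r t)
    (hψ : Cadlag ψ)
    (hconvl : ∀ T : ℝ, 0 < T → TendstoUniformlyOn ln l Filter.atTop (Set.Icc 0 T))
    (hconvr : ∀ T : ℝ, 0 < T → TendstoUniformlyOn rn r Filter.atTop (Set.Icc 0 T))
    (hconvψ : ∀ T : ℝ, 0 < T → TendstoUniformlyOn ψn ψ Filter.atTop (Set.Icc 0 T)) :
    ∀ T : ℝ, 0 < T →
      TendstoUniformlyOn (fun n => ESM (ln n) (rn n) (ψn n)) (ESM l r ψ)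
        Filter.atTop (Set.Icc 0 T) := by
  intro T hT
  rw [Metric.tendstoUniformlyOn_iff]
  intro ε hε
  have hε4 : 0 < ε / 4 := by linarith
  have Hl := Metric.tendstoUniformlyOn_iff.1 (hconvl T hT) (ε/4) hε4
  have Hr := Metric.tendstoUniformlyOn_iff.1 (hconvr T hT) (ε/4) hε4
  have Hψ := Metric.tendstoUniformlyOn_iff.1 (hconvψ T hT) (ε/4) hε4
  filter_upwards [Hl, Hr, Hψ] with n hl' hr' hψ'
  intro t ht
  have hbl : ∀ u ∈ Set.Icc (0:ℝ) T, |ln n u - l u| ≤ ε/4 := by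
    intro u hu
    have := hl' u hu
    rw [Real.dist_eq, abs_sub_comm] at this
    exact this.le
  have hbr : ∀ u ∈ Set.Icc (0:ℝ) T, |rn n u - r u| ≤ ε/4 := by
    intro u hu
    have := hr' u hu
    rw [Real.dist_eq, abs_sub_comm] at this
    exact this.le
  have hbψ : ∀ u ∈ Set.Icc (0:ℝ) T, |ψn n u - ψ u| ≤ ε/4 := by
    intro u hu
    have := hψ' u hu
    rw [Real.dist_eq, abs_sub_comm] at this
    exact this.le
  -- inner infimum estimate
  have hI : ∀ s ∈ Set.Icc (0:ℝ) t,
      |sInf ((fun u => ψn n u - ln n u) '' Set.Icc s t)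
        - sInf ((fun u => ψ u - l u) '' Set.Icc s t)| ≤ ε/2 := by
    intro s hs
    apply sInf_image_abs_sub_le (Set.nonempty_Icc.2 hs.2)
    intro u hu
    have huT : u ∈ Set.Icc (0:ℝ) T := ⟨hs.1.trans hu.1, hu.2.trans ht.2⟩
    have h1 := abs_le.1 (hbψ u huT)
    have h2 := abs_le.1 (hbl u huT)
    rw [abs_le]; constructor <;> [linarith [h1.1, h2.2]; linarith [h1.2, h2.1]]
  -- term estimate for the sup
  have hM : ∀ s ∈ Set.Icc (0:ℝ) t,
      |min (ψn n s - rn n s) (sInf ((fun u => ψn n u - ln n u) '' Set.Icc s t))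
        - min (ψ s - r s) (sInf ((fun u => ψ u - l u) '' Set.Icc s t))| ≤ ε/2 := by
    intro s hs
    have hsT : s ∈ Set.Icc (0:ℝ) T := ⟨hs.1, hs.2.trans ht.2⟩
    refine le_trans (abs_min_sub_min_le_max _ _ _ _) (max_le ?_ (hI s hs))
    have h1 := abs_le.1 (hbψ s hsT)
    have h2 := abs_le.1 (hbr s hsT)
    rw [abs_le]; constructor <;> [linarith [h1.1, h2.2]; linarith [h1.2, h2.1]]
  have hB : |sSup ((fun s => min (ψn n s - rn n s)
        (sInf ((fun u => ψn n u - ln n u) '' Set.Icc s t))) '' Set.Icc 0 t)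
      - sSup ((fun s => min (ψ s - r s)
        (sInf ((fun u => ψ u - l u) '' Set.Icc s t))) '' Set.Icc 0 t)| ≤ ε/2 :=
    sSup_image_abs_sub_le (Set.nonempty_Icc.2 ht.1) hM
  have h0T : (0:ℝ) ∈ Set.Icc (0:ℝ) T := ⟨le_refl 0, hT.le⟩
  have h0t : (0:ℝ) ∈ Set.Icc (0:ℝ) t := ⟨le_refl 0, ht.1⟩
  have hA : |min (max (ψn n 0 - rn n 0) 0) (sInf ((fun u => ψn n u - ln n u) '' Set.Icc 0 t))
      - min (max (ψ 0 - r 0) 0) (sInf ((fun u => ψ u - l u) '' Set.Icc 0 t))| ≤ ε/2 := by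
    refine le_trans (abs_min_sub_min_le_max _ _ _ _) (max_le ?_ (hI 0 h0t))
    refine le_trans (abs_max_sub_max_le_max _ _ _ _) (max_le ?_ (by simp; linarith))
    have h1 := abs_le.1 (hbψ 0 h0T)
    have h2 := abs_le.1 (hbr 0 h0T)
    rw [abs_le]; constructor <;> [linarith [h1.1, h2.2]; linarith [h1.2, h2.1]]
  have hXi : |Xi (ln n) (rn n) (ψn n) t - Xi l r ψ t| ≤ ε/2 := by
    unfold Xi
    exact le_trans (abs_max_sub_max_le_max _ _ _ _) (max_le hA hB)
  have hψt := abs_le.1 (hbψ t ⟨ht.1, ht.2⟩)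
  have hXi' := abs_le.1 hXi
  rw [Real.dist_eq]
  show |ESM l r ψ t - ESM (ln n) (rn n) (ψn n) t| < ε
  unfold ESM
  rw [abs_lt]
  constructor <;> [linarith [hψt.2, hXi'.2]; linarith [hψt.1, hXi'.1]]
end

section
/- Any solution of the ESP satisfies the jump relation: φ(0) = π_0(ψ(0)) and for every t > 0, φ(t) = π_t( φ(t−) + ψ(t) − ψ(t−) ), where π_t(x) = (x ∧ r(t)) ∨ ℓ(t). -/
open Set Filter

lemma esp_jump_aux (x d lo hi : ℝ) (h1 : lo ≤ x + d) (h2 : x + d ≤ hi)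
    (h3 : x + d < hi → 0 ≤ d) (h4 : lo < x + d → d ≤ 0) :
    x + d = max (min x hi) lo := by
  rcases le_or_gt x hi with hxh | hxh
  · rcases le_or_gt lo x with hlx | hlx
    · have hd : d = 0 := by
        rcases lt_trichotomy d 0 with hdd | hdd | hdd
        · linarith [h3 (by linarith)]
        · exact hdd
        · linarith [h4 (by linarith)]
      rw [min_eq_left hxh, max_eq_left (by linarith)]; linarith
    · have hxd : x + d = lo := by
        by_contra hne
        have : lo < x + d := lt_of_le_of_ne h1 (Ne.symm hne)
        linarith [h4 this]
      rw [min_eq_left hxh, max_eq_right (le_of_lt hlx)]; linarith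
  · have hxd : x + d = hi := by
      by_contra hne
      have : x + d < hi := lt_of_le_of_ne h2 hne
      linarith [h3 this]
    rw [min_eq_right (le_of_lt hxh), max_eq_left (by linarith)]; linarith

/-- Any càdlàg solution `(φ, η)` of the extended Skorokhod problem satisfies the jump
relation: `φ(0) = π₀(ψ(0))` and, for each `t > 0`,
`φ(t) = π_t( φ(t-) + ψ(t) - ψ(t-) )`, where `π_t(x) = (x ∧ r(t)) ∨ ℓ(t)`. -/
theorem esp_jump_relation (l r ψ φ η : ℝ → ℝ)
    (hl : Cadlag l) (hr : Cadlag r) (hlr : ∀ t : ℝ, 0 ≤ t → l t ≤ r t)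
    (hψ : Cadlag ψ) (hφ : Cadlag φ) (hη : Cadlag η)
    (h : ESP l r ψ φ η) :
    φ 0 = max (min (ψ 0) (r 0)) (l 0) ∧
    ∀ t : ℝ, 0 < t →
      φ t = max (min (Function.leftLim φ t + ψ t - Function.leftLim ψ t) (r t)) (l t) := by
  obtain ⟨hbd, _, _, hjump, h0⟩ := h
  constructor
  · obtain ⟨heq, hl0, hr0⟩ := hbd 0 le_rfl
    rw [heq] at hl0 hr0
    rw [heq]; refine esp_jump_aux (ψ 0) (η 0) (l 0) (r 0) hl0 hr0 ?_ ?_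
    · intro h'; exact h0.1 (by rw [heq]; exact h')
    · intro h'; exact h0.2 (by rw [heq]; exact h')
  · intro t ht
    obtain ⟨lψ, hlψ⟩ := (hψ t ht.le).2 ht
    obtain ⟨lη, hlη⟩ := (hη t ht.le).2 ht
    have hne : (nhdsWithin t (Set.Iio t)) ≠ ⊥ := NeBot.ne inferInstance
    have hev : ∀ᶠ u in nhdsWithin t (Set.Iio t), ψ u + η u = φ u := by
      filter_upwards [eventually_nhdsWithin_of_eventually_nhds
        (Filter.Tendsto.eventually_const_le ht Filter.tendsto_id)] with u hu
      exact ((hbd u hu).1).symm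
    have hφt : Filter.Tendsto φ (nhdsWithin t (Set.Iio t)) (nhds (lψ + lη)) :=
      (hlψ.add hlη).congr' hev
    have hφL : Function.leftLim φ t = lψ + lη := leftLim_eq_of_tendsto hφt
    have hψL : Function.leftLim ψ t = lψ := leftLim_eq_of_tendsto hlψ
    have hηL : Function.leftLim η t = lη := leftLim_eq_of_tendsto hlη
    obtain ⟨heq, hlt, hrt⟩ := hbd t ht.le
    have hsum : φ t = (Function.leftLim φ t + ψ t - Function.leftLim ψ t) + (η t - Function.leftLim η t) := by
      rw [hφL, hψL, hηL, heq]; ring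
    rw [hsum]
    obtain ⟨hj1, hj2⟩ := hjump t ht
    refine esp_jump_aux _ _ _ _ (by linarith) (by linarith) ?_ ?_
    · intro h'; have := hj1 (by linarith); linarith
    · intro h'; have := hj2 (by linarith); linarith
end
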